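/- arXiv:1704.01091 — 4 statements merged into one kernel-verified Lean document; each statement's English description precedes it below -/
import Mathlib

section
/- Let (W,S) be a finite Coxeter system which is a direct product of irreducible finite Coxeter systems, each of whose Coxeter numbers is at least 3 (for Weyl groups this is exactly the condition that no irreducible factor is of type A_1). Then every fat ideal I of the Bruhat order on W contains every element w in W with length l(w) at most 1, i.e., the identity and every simple reflection s in S lie in I. -/
/-- The Bruhat order on a Coxeter group: `x ≤ y` if and only if `x` is the product of
a subword of some reduced word for `y`. -/
def CoxeterSystem.bruhatLE {B W : Type*} [Group W] {M : CoxeterMatrix B}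
    (cs : CoxeterSystem M W) (x y : W) : Prop :=
  ∃ ω : List B, cs.IsReduced ω ∧ cs.wordProd ω = y ∧
    ∃ ω' : List B, ω'.Sublist ω ∧ cs.wordProd ω' = x

/-- Two indices lie in the same irreducible component of a Coxeter system iff they are
related by the equivalence closure of adjacency in the Coxeter diagram (distinct indices
`a`, `b` are adjacent iff `M a b ≠ 2`). -/
def CoxeterMatrix.SameComponent {B : Type*} (M : CoxeterMatrix B) (i j : B) : Prop :=
  Relation.EqvGen (fun a b => a ≠ b ∧ M a b ≠ 2) i j


open List

namespace CoxProof

open CoxeterSystem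

variable {B W : Type*} [Group W] {M : CoxeterMatrix B} (cs : CoxeterSystem M W)

local prefix:100 "σ" => cs.simple
local prefix:100 "π" => cs.wordProd

noncomputable section
open scoped Classical

def ind (p : Prop) : ZMod 2 := if p then 1 else 0

theorem ind_congr {p q : Prop} (h : p ↔ q) : ind p = ind q := by
  simp only [ind, h]

theorem ind_add_self (p : Prop) : ind p + ind p = 0 := by
  unfold ind; split <;> decide

def sigma0 (i : B) : Equiv.Perm (W × ZMod 2) :=
  Function.Involutive.toPerm
    (fun p => (σ i * p.1 * σ i, p.2 + ind (p.1 = σ i)))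
    (by
      intro p
      have h1 : σ i * (σ i * p.1 * σ i) * σ i = p.1 := by
        rw [← mul_assoc, ← mul_assoc, cs.simple_mul_simple_self, one_mul,
          mul_assoc, cs.simple_mul_simple_self, mul_one]
      have h2 : (σ i * p.1 * σ i = σ i) ↔ (p.1 = σ i) := by
        constructor
        · intro h
          have := congrArg (fun x => σ i * x * σ i) h
          simpa [← mul_assoc, cs.simple_mul_simple_self,
            mul_assoc, cs.simple_mul_simple_self] using this
        · rintro h
          rw [h, cs.simple_mul_simple_self, one_mul]
      ext
      · exact h1
      · simp only [ind_congr h2, add_assoc, ind_add_self, add_zero])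

@[simp] theorem sigma0_apply (i : B) (p : W × ZMod 2) :
    sigma0 cs i p = (σ i * p.1 * σ i, p.2 + ind (p.1 = σ i)) := rfl

def dd (a b : B) (k : ℕ) : W := π (alternatingWord a b k)

def rr (a b : B) (k : ℕ) : W := (dd cs a b k)⁻¹ * dd cs a b (k + 1)

theorem dd_zero (a b : B) : dd cs a b 0 = 1 := by
  simp [dd, alternatingWord]

theorem dd_succ (a b : B) (k : ℕ) :
    dd cs a b (k + 1) = σ (if Even k then b else a) * dd cs a b k := by
  rw [dd, dd, alternatingWord_succ', cs.wordProd_cons]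

theorem rr_eq (a b : B) (k : ℕ) :
    rr cs a b k = (dd cs a b k)⁻¹ * σ (if Even k then b else a) * dd cs a b k := by
  rw [rr, dd_succ, ← mul_assoc]

theorem dd_braid (a b : B) : dd cs a b (M a b) = dd cs b a (M b a) := by
  rw [dd, dd]
  exact cs.wordProd_braidWord_eq a b

theorem z_mul_sb (a b : B) :
    dd cs a b (M a b) * σ b = σ (if Even (M a b) then b else a) * dd cs a b (M a b) := by
  have h1 : dd cs a b (M a b + 1) = σ (if Even (M a b) then b else a) * dd cs a b (M a b) :=
    dd_succ cs a b (M a b)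
  have h2 : dd cs a b (M a b + 1) = dd cs a b (M a b) * σ b := by
    rw [dd, alternatingWord_succ, concat_eq_append, cs.wordProd_append, cs.wordProd_singleton]
    rw [← dd, ← dd_braid, M.symmetric b a]
  rw [← h1, h2]

theorem z_mul_sa (a b : B) :
    dd cs a b (M a b) * σ a = σ (if Even (M a b) then a else b) * dd cs a b (M a b) := by
  have h := z_mul_sb cs b a
  rw [← dd_braid cs a b] at h
  rw [← M.symmetric a b] at h
  exact h

theorem dd_add_m (a b : B) (K : ℕ) :
    dd cs a b (K + M a b) = dd cs a b (M a b) * dd cs a b K := by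
  induction K with
  | zero => simp [dd_zero]
  | succ K ih =>
    have h0 : K + 1 + M a b = (K + M a b) + 1 := by omega
    rw [h0, dd_succ, ih, dd_succ cs a b K]
    have key : σ (if Even (K + M a b) then b else a) * dd cs a b (M a b)
        = dd cs a b (M a b) * σ (if Even K then b else a) := by
      by_cases hK : Even K
      · have hKm : (Even (K + M a b)) ↔ Even (M a b) := by
          rw [Nat.even_add]; tauto
        rw [if_pos hK]
        rw [show (if Even (K + M a b) then b else a) = (if Even (M a b) then b else a) by
          simp only [hKm]]
        exact (z_mul_sb cs a b).symm
      · have hKm : (Even (K + M a b)) ↔ ¬ Even (M a b) := by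
          rw [Nat.even_add]; tauto
        rw [if_neg hK]
        rw [show (if Even (K + M a b) then b else a) = (if Even (M a b) then a else b) by
          by_cases hm : Even (M a b) <;> simp [hKm, hm]]
        exact (z_mul_sa cs a b).symm
    rw [← mul_assoc, ← mul_assoc, key]

theorem rr_period (a b : B) (k : ℕ) :
    rr cs a b (k + M a b) = rr cs a b k := by
  rw [rr, rr, dd_add_m, show k + M a b + 1 = (k + 1) + M a b by omega, dd_add_m]
  simp [mul_assoc]

end
end CoxProof

namespace CoxProof
noncomputable section
open scoped Classical
open CoxeterSystem List

variable {B W : Type*} [Group W] {M : CoxeterMatrix B} (cs : CoxeterSystem M W)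

local prefix:100 "σ" => cs.simple
local prefix:100 "π" => cs.wordProd

theorem dd_two_mul (a b : B) : dd cs a b (2 * M a b) = 1 := by
  rw [dd, prod_alternatingWord_eq_mul_pow]
  rw [if_pos (even_two_mul _), Nat.mul_div_cancel_left _ (by norm_num), one_mul,
    cs.simple_mul_simple_pow]

theorem sigma_prod_pow (a b : B) (n : ℕ) (t : W) (ε : ZMod 2) :
    ((sigma0 cs a * sigma0 cs b) ^ n) (t, ε) =
      (dd cs a b (2 * n) * t * (dd cs a b (2 * n))⁻¹,
        ε + ∑ k ∈ Finset.range (2 * n), ind (t = rr cs a b k)) := by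
  induction n with
  | zero => simp [dd_zero]
  | succ n ih =>
    rw [pow_succ', Equiv.Perm.mul_apply, ih]
    rw [Equiv.Perm.mul_apply, sigma0_apply, sigma0_apply]
    have e1 : Even (2 * n) := even_two_mul n
    have e2 : ¬ Even (2 * n + 1) := by simp [Nat.even_add_one, e1]
    have hd1 : dd cs a b (2 * n + 1) = σ b * dd cs a b (2 * n) := by
      rw [dd_succ, if_pos e1]
    have hd2 : dd cs a b (2 * (n + 1)) = σ a * dd cs a b (2 * n + 1) := by
      rw [show 2 * (n + 1) = (2 * n + 1) + 1 by omega, dd_succ, if_neg e2]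
    set D := dd cs a b (2 * n) with hD
    dsimp only
    rw [Prod.mk.injEq]
    constructor
    · show σ a * (σ b * (D * t * D⁻¹) * σ b) * σ a = _
      rw [hd2, hd1]
      group
      simp [zpow_neg, zpow_one, mul_assoc, cs.simple_mul_simple_self]
    · show (ε + ∑ k ∈ Finset.range (2 * n), ind (t = rr cs a b k))
          + ind (D * t * D⁻¹ = σ b) + ind (σ b * (D * t * D⁻¹) * σ b = σ a) = _
      have i1 : (D * t * D⁻¹ = σ b) ↔ (t = rr cs a b (2 * n)) := by
        rw [rr_eq, if_pos e1, ← hD]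
        constructor
        · intro h
          rw [← h]; group
        · intro h
          rw [h]; group
      have i2 : (σ b * (D * t * D⁻¹) * σ b = σ a) ↔ (t = rr cs a b (2 * n + 1)) := by
        rw [rr_eq, if_neg e2, hd1]
        constructor
        · intro h
          rw [← h]; group
          simp [zpow_neg, zpow_one, mul_assoc, cs.simple_mul_simple_self]
        · intro h
          rw [h]; group
          simp [zpow_neg, zpow_one, mul_assoc, cs.simple_mul_simple_self]
      rw [ind_congr i1, ind_congr i2]
      rw [show 2 * (n + 1) = (2 * n) + 1 + 1 by omega, Finset.sum_range_succ,
        Finset.sum_range_succ]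
      ring

theorem sigma0_liftable (a b : B) : (sigma0 cs a * sigma0 cs b) ^ M a b = 1 := by
  apply Equiv.ext
  rintro ⟨t, ε⟩
  have key := sigma_prod_pow cs a b (M a b) t ε
  rw [show ((sigma0 cs a * sigma0 cs b) ^ M a b) (t, ε)
      = ((sigma0 cs a * sigma0 cs b) ^ M a b) (t, ε) from rfl] at key
  rw [key, dd_two_mul]
  have hsum : ∑ k ∈ Finset.range (2 * M a b), ind (t = rr cs a b k) = 0 := by
    rw [two_mul, Finset.sum_range_add]
    have : ∀ k, ind (t = rr cs a b (M a b + k)) = ind (t = rr cs a b k) := by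
      intro k
      rw [ind_congr (by rw [add_comm, rr_period])]
    simp only [this]
    rw [← Finset.sum_add_distrib]
    simp [ind_add_self]
  rw [hsum]
  simp

end
end CoxProof

namespace CoxProof
noncomputable section
open scoped Classical
open CoxeterSystem List

variable {B W : Type*} [Group W] {M : CoxeterMatrix B} (cs : CoxeterSystem M W)

local prefix:100 "σ" => cs.simple
local prefix:100 "π" => cs.wordProd
local prefix:100 "ℓ" => cs.length

set_option linter.unusedSectionVars false

/-- count modulo 2 -/
def cnt (t : W) : List W → ZMod 2
  | [] => 0
  | x :: l => ind (t = x) + cnt t l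

@[simp] theorem cnt_nil (t : W) : cnt t [] = 0 := rfl

theorem cnt_cons (t x : W) (l : List W) : cnt t (x :: l) = ind (t = x) + cnt t l := rfl

theorem cnt_append (t : W) (l₁ l₂ : List W) :
    cnt t (l₁ ++ l₂) = cnt t l₁ + cnt t l₂ := by
  induction l₁ with
  | nil => simp
  | cons x l ih => simp [cnt_cons, ih, add_assoc]

theorem cnt_eq_zero_of_not_mem {t : W} {l : List W} (h : t ∉ l) : cnt t l = 0 := by
  induction l with
  | nil => rfl
  | cons x l ih =>
    have h1 : ¬ (t = x) := fun h' => h (by rw [h']; exact mem_cons_self)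
    have h2 : t ∉ l := fun h' => h (mem_cons_of_mem x h')
    rw [cnt_cons, ind_congr (iff_false_intro h1), ih h2, add_zero]
    simp [ind]

theorem cnt_reverse (t : W) (l : List W) : cnt t l.reverse = cnt t l := by
  induction l with
  | nil => rfl
  | cons x l ih => rw [reverse_cons, cnt_append, ih, cnt_cons]; simp [cnt_cons, add_comm]

theorem cnt_map_conj (g t : W) (l : List W) :
    cnt t (l.map (fun x => g * x * g⁻¹)) = cnt (g⁻¹ * t * g) l := by
  induction l with
  | nil => rfl
  | cons x l ih =>
    rw [map_cons, cnt_cons, cnt_cons, ih]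
    congr 1
    apply ind_congr
    constructor
    · intro h; rw [h]; group
    · intro h; rw [← h]; group

/-- The sign representation on `W × ZMod 2`. -/
def sigmaRep : W →* Equiv.Perm (W × ZMod 2) :=
  cs.lift ⟨fun i => sigma0 cs i, fun a b => sigma0_liftable cs a b⟩

theorem sigmaRep_simple (i : B) : sigmaRep cs (σ i) = sigma0 cs i :=
  cs.lift_apply_simple _ i

theorem ris_cons (i : B) (ω : List B) :
    cs.rightInvSeq (i :: ω) = ((π ω)⁻¹ * σ i * π ω) :: cs.rightInvSeq ω := rfl

theorem sigmaRep_eval (ω : List B) (t : W) (ε : ZMod 2) :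
    sigmaRep cs (π ω) (t, ε) =
      (π ω * t * (π ω)⁻¹, ε + cnt t (cs.rightInvSeq ω)) := by
  induction ω generalizing ε with
  | nil => simp [cs.wordProd_nil]
  | cons i ω ih =>
    rw [cs.wordProd_cons, map_mul, Equiv.Perm.mul_apply, ih, sigmaRep_simple, sigma0_apply]
    rw [ris_cons, cnt_cons]
    dsimp only
    rw [Prod.mk.injEq]
    constructor
    · rw [mul_inv_rev, cs.inv_simple]
      group
    · rw [ind_congr (show (π ω * t * (π ω)⁻¹ = σ i) ↔ (t = (π ω)⁻¹ * σ i * π ω) by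
        constructor
        · intro h; rw [← h]; group
        · intro h; rw [h]; group)]
      ring

/-- parity of the number of times `t` occurs in an inversion sequence of any word for `w`. -/
def nn (t w : W) : ZMod 2 := (sigmaRep cs w (t, 0)).2

theorem nn_eq_cnt (ω : List B) (t : W) :
    nn cs t (π ω) = cnt t (cs.rightInvSeq ω) := by
  rw [nn, sigmaRep_eval]
  simp

theorem ris_append (α β : List B) :
    cs.rightInvSeq (α ++ β) =
      (cs.rightInvSeq α).map (fun x => (π β)⁻¹ * x * (π β)) ++ cs.rightInvSeq β := by
  induction α with
  | nil => simp
  | cons i α ih =>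
    rw [cons_append, ris_cons, ris_cons, ih, map_cons, cons_append]
    congr 1
    rw [cs.wordProd_append, mul_inv_rev]
    group

theorem lis_eq_map_ris (ω : List B) :
    cs.leftInvSeq ω = (cs.rightInvSeq ω).map (fun x => π ω * x * (π ω)⁻¹) := by
  induction ω with
  | nil => simp
  | cons i ω ih =>
    show σ i :: List.map (MulAut.conj (σ i)) (cs.leftInvSeq ω) = _
    rw [ris_cons, map_cons, ih, map_map]
    congr 1
    · rw [cs.wordProd_cons, mul_inv_rev, cs.inv_simple]
      simp [mul_assoc, cs.simple_mul_simple_self]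
    · apply List.map_congr_left
      intro x _
      simp only [Function.comp_apply, MulAut.conj_apply, cs.wordProd_cons, mul_inv_rev,
        cs.inv_simple]
      group

theorem cnt_palindrome (κ : List B) (k : B) :
    cnt (π κ * σ k * (π κ)⁻¹) (cs.rightInvSeq (κ ++ ([k] ++ κ.reverse))) = 1 := by
  have hβ : π ([k] ++ κ.reverse) = σ k * (π κ)⁻¹ := by
    rw [cs.wordProd_append, cs.wordProd_singleton, cs.wordProd_reverse]
  rw [ris_append, hβ, cnt_append]
  have part1 : cnt (π κ * σ k * (π κ)⁻¹)
      ((cs.rightInvSeq κ).map (fun x => (σ k * (π κ)⁻¹)⁻¹ * x * (σ k * (π κ)⁻¹))) =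
      cnt (σ k) (cs.rightInvSeq κ) := by
    have hfun : (fun x : W => (σ k * (π κ)⁻¹)⁻¹ * x * (σ k * (π κ)⁻¹))
        = (fun x : W => ((σ k * (π κ)⁻¹)⁻¹) * x * ((σ k * (π κ)⁻¹)⁻¹)⁻¹) := by
      funext x; rw [inv_inv]
    rw [hfun, cnt_map_conj]
    congr 1
    rw [inv_inv, mul_inv_rev, inv_inv, cs.inv_simple]
    simp [mul_assoc, cs.simple_mul_simple_self]
  have part23 : cnt (π κ * σ k * (π κ)⁻¹) (cs.rightInvSeq ([k] ++ κ.reverse)) =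
      1 + cnt (σ k) (cs.rightInvSeq κ) := by
    rw [ris_append, cnt_append]
    have h2 : cnt (π κ * σ k * (π κ)⁻¹) ((cs.rightInvSeq [k]).map
        (fun x => (π κ.reverse)⁻¹ * x * (π κ.reverse))) = 1 := by
      rw [cs.rightInvSeq_singleton, cs.wordProd_reverse, inv_inv, map_singleton, cnt_cons,
        cnt_nil, add_zero, ind_congr (iff_true_intro rfl)]
      simp [ind]
    have h3 : cnt (π κ * σ k * (π κ)⁻¹) (cs.rightInvSeq κ.reverse) =
        cnt (σ k) (cs.rightInvSeq κ) := by
      rw [cs.rightInvSeq_reverse, cnt_reverse, lis_eq_map_ris, cnt_map_conj]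
      congr 1
      simp [mul_assoc, cs.simple_mul_simple_self]
    rw [h2, h3]
  rw [part1, part23]
  have : ∀ x : ZMod 2, x + (1 + x) = 1 := by decide
  exact this _

theorem nn_mul_reflection {t : W} (ht : cs.IsReflection t) (w : W) :
    nn cs t (w * t) = nn cs t w + 1 := by
  obtain ⟨q, k, htq⟩ := ht
  obtain ⟨κ, hκ⟩ := cs.wordProd_surjective q
  obtain ⟨ωw, hωw⟩ := cs.wordProd_surjective w
  have hτ : π (κ ++ ([k] ++ κ.reverse)) = t := by
    rw [cs.wordProd_append, cs.wordProd_append, cs.wordProd_singleton, cs.wordProd_reverse,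
      hκ, htq, mul_assoc]
  have hwt : w * t = π (ωw ++ (κ ++ ([k] ++ κ.reverse))) := by
    rw [cs.wordProd_append, hτ, hωw]
  rw [hwt, nn_eq_cnt, ris_append, cnt_append, hτ]
  have h1 : cnt t ((cs.rightInvSeq ωw).map (fun x => t⁻¹ * x * t)) =
      cnt t (cs.rightInvSeq ωw) := by
    rw [show (fun x : W => t⁻¹ * x * t) = (fun x : W => t⁻¹ * x * t⁻¹⁻¹) by
      funext x; rw [inv_inv]]
    rw [cnt_map_conj]
    congr 1
    group
  rw [h1]
  have h2 := cnt_palindrome cs κ k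
  rw [hκ, ← htq] at h2
  rw [h2, ← hωw, nn_eq_cnt]

end
end CoxProof

namespace CoxProof
noncomputable section
open scoped Classical
open CoxeterSystem List

variable {B W : Type*} [Group W] {M : CoxeterMatrix B} (cs : CoxeterSystem M W)

local prefix:100 "σ" => cs.simple
local prefix:100 "π" => cs.wordProd
local prefix:100 "ℓ" => cs.length

theorem zmod2_cases (x : ZMod 2) : x = 0 ∨ x = 1 := by revert x; decide

/-- Strong exchange, membership form, right version. -/
theorem mem_rightInvSeq_of_isRightInversion {ω : List B} (hω : cs.IsReduced ω) {t : W}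
    (ht : cs.IsReflection t) (hlt : ℓ (π ω * t) < ℓ (π ω)) :
    t ∈ cs.rightInvSeq ω := by
  have key : nn cs t (π ω) = 1 := by
    rcases zmod2_cases (nn cs t (π ω)) with h0 | h1
    · exfalso
      -- then t appears an odd number of times in any reduced word for `π ω * t`
      have h1 : nn cs t (π ω * t) = 1 := by
        rw [nn_mul_reflection cs ht, h0, zero_add]
      obtain ⟨ω₁, hω₁red, hω₁⟩ := cs.exists_reduced_word' (π ω * t)
      have hmem : t ∈ cs.rightInvSeq ω₁ := by
        by_contra hmem
        rw [hω₁, nn_eq_cnt, cnt_eq_zero_of_not_mem hmem] at h1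
        exact absurd h1 (by decide)
      obtain ⟨j, hj, hget⟩ := List.getElem_of_mem hmem
      rw [cs.length_rightInvSeq] at hj
      have hgetD : (cs.rightInvSeq ω₁).getD j 1 = t := by
        rw [List.getD_eq_getElem _ _ (by rw [cs.length_rightInvSeq]; exact hj), hget]
      have herase : π ω₁ * t = π (ω₁.eraseIdx j) := by
        rw [← hgetD]
        exact cs.wordProd_mul_getD_rightInvSeq ω₁ j
      have hup : π ω₁ * t = π ω := by
        rw [← hω₁, mul_assoc, ht.mul_self, mul_one]
      have hlen : ℓ (π ω) ≤ (ω₁.eraseIdx j).length := by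
        rw [← hup, herase]
        exact cs.length_wordProd_le _
      have hlen2 : (ω₁.eraseIdx j).length + 1 = ω₁.length := by
        rw [List.length_eraseIdx_add_one hj]
      have hred : ω₁.length = ℓ (π ω * t) := by rw [hω₁]; exact hω₁red.symm
      omega
    · exact h1
  by_contra hmem
  rw [nn_eq_cnt, cnt_eq_zero_of_not_mem hmem] at key
  exact absurd key (by decide)

/-- Strong exchange, membership form, left version. -/
theorem mem_leftInvSeq_of_isLeftInversion {ω : List B} (hω : cs.IsReduced ω) {t : W}
    (ht : cs.IsReflection t) (hlt : ℓ (t * π ω) < ℓ (π ω)) :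
    t ∈ cs.leftInvSeq ω := by
  have hrev : cs.IsReduced ω.reverse := (cs.isReduced_reverse_iff ω).mpr hω
  have hlt' : ℓ (π ω.reverse * t) < ℓ (π ω.reverse) := by
    rw [cs.wordProd_reverse]
    have e1 : ℓ ((π ω)⁻¹ * t) = ℓ (t * π ω) := by
      rw [← cs.length_inv ((π ω)⁻¹ * t), mul_inv_rev, inv_inv, ht.inv]
    rw [e1, cs.length_inv]
    exact hlt
  have := mem_rightInvSeq_of_isRightInversion cs hrev ht hlt'
  rw [cs.rightInvSeq_reverse] at this
  exact (List.mem_reverse).mp this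

end
end CoxProof

namespace CoxProof
noncomputable section
open scoped Classical
open CoxeterSystem List Real

set_option linter.unusedSectionVars false

variable {B : Type*} [Fintype B] [DecidableEq B]

/-- The cosine matrix (scaled by 2) associated with a Coxeter matrix. -/
def kk (M : CoxeterMatrix B) (c d : B) : ℝ :=
  if M c d = 0 then 2 else -2 * Real.cos (Real.pi / M c d)

theorem kk_diag (M : CoxeterMatrix B) (c : B) : kk M c c = 2 := by
  rw [kk, M.diagonal c]
  norm_num [Real.cos_pi]

theorem kk_symm (M : CoxeterMatrix B) (c d : B) : kk M c d = kk M d c := by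
  rw [kk, kk, M.symmetric c d]

theorem kk_ne_zero (M : CoxeterMatrix B) {c d : B} (h2 : M c d ≠ 2) (h1 : M c d ≠ 1) :
    kk M c d ≠ 0 := by
  rw [kk]
  by_cases h0 : M c d = 0
  · rw [if_pos h0]; norm_num
  · rw [if_neg h0]
    have hlt : Real.pi / M c d < Real.pi / 2 := by
      apply div_lt_div_of_pos_left Real.pi_pos (by norm_num)
      exact_mod_cast (by omega : 2 < M c d)
    have hgt : (0:ℝ) < Real.pi / M c d := by
      apply div_pos Real.pi_pos
      exact_mod_cast (by omega : 0 < M c d)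
    have : 0 < Real.cos (Real.pi / M c d) :=
      Real.cos_pos_of_mem_Ioo ⟨by linarith [Real.pi_pos], hlt⟩
    intro hc
    nlinarith

/-- the basis vector `α_c` -/
def av (c : B) : B → ℝ := Pi.single c (1:ℝ)

theorem av_self (c : B) : av c c = 1 := by simp [av]

theorem av_ne {c i : B} (h : i ≠ c) : av (B := B) c i = 0 := by
  simp [av, Pi.single_eq_of_ne h]

/-- linear form `x ↦ B(x, αc)` -/
def bc (M : CoxeterMatrix B) (c : B) (x : B → ℝ) : ℝ := ∑ d, x d * kk M d c

theorem bc_add (M : CoxeterMatrix B) (c : B) (x y : B → ℝ) :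
    bc M c (x + y) = bc M c x + bc M c y := by
  simp [bc, add_mul, Finset.sum_add_distrib]

theorem bc_smul (M : CoxeterMatrix B) (c : B) (r : ℝ) (x : B → ℝ) :
    bc M c (r • x) = r * bc M c x := by
  simp [bc, Finset.mul_sum, mul_assoc]

theorem bc_sub (M : CoxeterMatrix B) (c : B) (x y : B → ℝ) :
    bc M c (x - y) = bc M c x - bc M c y := by
  simp [bc, sub_mul, Finset.sum_sub_distrib]

theorem bc_neg (M : CoxeterMatrix B) (c : B) (x : B → ℝ) :
    bc M c (-x) = - bc M c x := by
  simp [bc]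

theorem bc_av (M : CoxeterMatrix B) (c d : B) :
    bc M c (av d) = kk M d c := by
  rw [bc]
  rw [Finset.sum_eq_single d]
  · simp [av_self]
  · intro e _ he
    rw [av_ne he]
    ring
  · intro h
    exact absurd (Finset.mem_univ d) h

/-- The reflection `x ↦ x - B(x, αc) αc`. -/
def refl0 (M : CoxeterMatrix B) (c : B) : (B → ℝ) →ₗ[ℝ] (B → ℝ) where
  toFun x := x - bc M c x • av c
  map_add' x y := by
    rw [bc_add, add_smul]
    abel
  map_smul' r x := by
    rw [RingHom.id_apply, bc_smul, smul_sub, smul_smul, mul_smul]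

theorem refl0_apply (M : CoxeterMatrix B) (c : B) (x : B → ℝ) :
    refl0 M c x = x - bc M c x • av c := rfl

theorem refl0_av_self (M : CoxeterMatrix B) (c : B) :
    refl0 M c (av c) = - av c := by
  rw [refl0_apply, bc_av, kk_diag]
  module

theorem refl0_coord (M : CoxeterMatrix B) {c i : B} (h : c ≠ i) (x : B → ℝ) :
    refl0 M c x i = x i := by
  rw [refl0_apply]
  simp [av_ne (Ne.symm h)]

theorem refl0_fixed (M : CoxeterMatrix B) {c : B} {x : B → ℝ} (h : bc M c x = 0) :
    refl0 M c x = x := by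
  rw [refl0_apply, h]
  simp

theorem refl0_invol (M : CoxeterMatrix B) (c : B) (x : B → ℝ) :
    refl0 M c (refl0 M c x) = x := by
  rw [refl0_apply, refl0_apply, bc_sub, bc_smul, bc_av, kk_diag]
  rw [show bc M c x - bc M c x * 2 = - bc M c x by ring]
  module

end
end CoxProof

namespace CoxProof
noncomputable section
open scoped Classical
open CoxeterSystem List Real

set_option linter.unusedSectionVars false

variable {B : Type*} [Fintype B] [DecidableEq B]

theorem refl0_mul_self (M : CoxeterMatrix B) (c : B) :
    refl0 M c * refl0 M c = 1 := by
  apply LinearMap.ext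
  intro x
  rw [Module.End.mul_apply, refl0_invol, Module.End.one_apply]

/-- main liftability computation for `2 ≤ m` -/
theorem refl0_pow_eq_one (M : CoxeterMatrix B) (c d : B) :
    (refl0 M c * refl0 M d) ^ (M c d) = 1 := by
  by_cases hcd : c = d
  · subst hcd
    rw [M.diagonal c, pow_one, refl0_mul_self]
  by_cases h0 : M c d = 0
  · rw [h0, pow_zero]
  -- now m ≥ 2
  have h1 : M c d ≠ 1 := M.off_diagonal c d hcd
  have hm2 : 2 ≤ M c d := by omega
  set m := M c d with hm
  set γ := kk M c d with hγdef
  have hγsym : kk M d c = γ := (kk_symm M c d).symm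
  have hγ : γ = -2 * Real.cos (Real.pi / m) := by rw [hγdef, kk, if_neg h0]
  have hmR : (0:ℝ) < (m:ℝ) := by exact_mod_cast (by omega : 0 < m)
  have hθpos : 0 < Real.pi / m := div_pos Real.pi_pos hmR
  have hθlt : Real.pi / m < Real.pi := by
    rw [div_lt_iff₀ hmR]
    have h2R : (2:ℝ) ≤ (m:ℝ) := by exact_mod_cast hm2
    nlinarith [Real.pi_pos, mul_le_mul_of_nonneg_left h2R (le_of_lt Real.pi_pos)]
  have hsθ : 0 < Real.sin (Real.pi / m) := Real.sin_pos_of_pos_of_lt_pi hθpos hθlt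
  have h4 : (4:ℝ) - γ^2 ≠ 0 := by
    have := Real.sin_sq_add_cos_sq (Real.pi / m)
    rw [hγ]
    nlinarith
  set T := refl0 M c * refl0 M d with hT
  -- action on basic vectors
  have hdc : refl0 M d (av c) = av c - γ • av (B := B) d := by
    rw [refl0_apply, bc_av, hγdef]
  have hcd' : refl0 M c (av d) = av d - γ • av (B := B) c := by
    rw [refl0_apply, bc_av, hγsym]
  have hTc : T (av c) = (γ^2 - 1) • av c - γ • av (B := B) d := by
    rw [hT, Module.End.mul_apply, hdc, map_sub, map_smul, refl0_av_self, hcd']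
    module
  have hTd : T (av d) = γ • av c - av (B := B) d := by
    rw [hT, Module.End.mul_apply, refl0_av_self, map_neg, hcd']
    module
  have hTfix : ∀ r : B → ℝ, bc M c r = 0 → bc M d r = 0 → T r = r := by
    intro r h1 h2
    rw [hT, Module.End.mul_apply, refl0_fixed M h2, refl0_fixed M h1]
  have hTnfix : ∀ (n : ℕ) (r : B → ℝ), bc M c r = 0 → bc M d r = 0 → (T ^ n) r = r := by
    intro n r h1 h2
    induction n with
    | zero => simp
    | succ n ih => rw [pow_succ, Module.End.mul_apply, hTfix r h1 h2, ih]
  have hTsq : ∀ v : B → ℝ, (v = av c ∨ v = av d) → T (T v) = (γ^2 - 2) • T v - v := by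
    rintro v (rfl | rfl)
    · rw [hTc, map_sub, map_smul, map_smul, hTc, hTd]
      module
    · rw [hTd, map_sub, map_smul, hTc, hTd]
      module
  -- decomposition
  have hdecomp : ∀ x : B → ℝ, ∃ lam mu : ℝ, ∃ r : B → ℝ,
      bc M c r = 0 ∧ bc M d r = 0 ∧ x = lam • av c + mu • av d + r := by
    intro x
    refine ⟨(2 * bc M c x - γ * bc M d x) / (4 - γ^2),
      (2 * bc M d x - γ * bc M c x) / (4 - γ^2),
      x - ((2 * bc M c x - γ * bc M d x) / (4 - γ^2)) • av c
        - ((2 * bc M d x - γ * bc M c x) / (4 - γ^2)) • av d, ?_, ?_, by module⟩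
    · rw [bc_sub, bc_sub, bc_smul, bc_smul, bc_av, bc_av, kk_diag, hγsym]
      field_simp
      ring
    · rw [bc_sub, bc_sub, bc_smul, bc_smul, bc_av, bc_av, kk_diag, ← hγdef]
      field_simp
      ring
  -- the power acts trivially on av c and av d
  have hkey : ∀ v : B → ℝ, (v = av c ∨ v = av d) → (T ^ m) v = v := by
    intro v hv
    by_cases hm2' : m = 2
    · -- γ = 0 in this case
      have hγ0 : γ = 0 := by
        rw [hγ, hm2']
        norm_num [Real.cos_pi_div_two]
      have hTv : T v = -v := by
        rcases hv with rfl | rfl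
        · rw [hTc, hγ0]; module
        · rw [hTd, hγ0]; module
      rw [hm2', pow_two, Module.End.mul_apply, hTv, map_neg, hTv, neg_neg]
    · -- m ≥ 3 : Chebyshev
      have hm3 : 3 ≤ m := by omega
      set φ := 2 * (Real.pi / m) with hφ
      have hφpos : 0 < φ := by positivity
      have hφlt : φ < Real.pi := by
        rw [hφ, show 2 * (Real.pi / m) = (2 * Real.pi) / m by ring, div_lt_iff₀ hmR]
        have h3R : (3:ℝ) ≤ (m:ℝ) := by exact_mod_cast hm3
        nlinarith [Real.pi_pos, mul_le_mul_of_nonneg_left h3R (le_of_lt Real.pi_pos)]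
      have hsφ : Real.sin φ ≠ 0 := ne_of_gt (Real.sin_pos_of_pos_of_lt_pi hφpos hφlt)
      have htrace : γ^2 - 2 = 2 * Real.cos φ := by
        rw [hγ, hφ, Real.cos_two_mul]
        ring
      set u : ℕ → ℝ := fun n => Real.sin (n * φ) / Real.sin φ with hu
      have hu0 : u 0 = 0 := by simp [hu]
      have hu1 : u 1 = 1 := by
        simp only [hu, Nat.cast_one, one_mul]
        exact div_self hsφ
      have hurec : ∀ n : ℕ, u (n + 2) = (γ^2 - 2) * u (n + 1) - u n := by
        intro n
        have e1 : ((n:ℝ) + 2) * φ = ((n:ℝ) + 1) * φ + φ := by ring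
        have e2 : (n:ℝ) * φ = ((n:ℝ) + 1) * φ - φ := by ring
        simp only [hu]
        rw [htrace]
        push_cast
        rw [e1, e2, Real.sin_add, Real.sin_sub]
        field_simp
        ring
      have hform : ∀ n : ℕ, (T ^ (n + 1)) v = u (n + 1) • T v - u n • v := by
        intro n
        induction n with
        | zero =>
          rw [hu0, hu1, pow_one]
          module
        | succ n ih =>
          rw [pow_succ', Module.End.mul_apply, ih, map_sub, map_smul, map_smul,
            hTsq v hv, hurec n]
          module
      have hum : u m = 0 := by
        have : (m:ℝ) * φ = 2 * Real.pi := by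
          rw [hφ]
          field_simp
        simp only [hu, this, Real.sin_two_pi, zero_div]
      have hum1 : u (m - 1) = -1 := by
        have hcast : ((m - 1 : ℕ) : ℝ) = (m:ℝ) - 1 := by
          have : 1 ≤ m := by omega
          push_cast [this]
          ring
        have e : ((m:ℝ) - 1) * φ = 2 * Real.pi - φ := by
          rw [hφ]
          field_simp
        simp only [hu, hcast, e, Real.sin_sub, Real.sin_two_pi, Real.cos_two_pi]
        rw [zero_mul, one_mul, zero_sub, neg_div, div_self hsφ]
      have : (T ^ ((m - 1) + 1)) v = u ((m-1) + 1) • T v - u (m - 1) • v := hform (m - 1)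
      rw [show (m - 1) + 1 = m by omega] at this
      rw [this, hum, hum1]
      module
  -- conclude
  apply LinearMap.ext
  intro x
  obtain ⟨lam, mu, r, hr1, hr2, hx⟩ := hdecomp x
  rw [Module.End.one_apply, hx, map_add, map_add, map_smul, map_smul,
    hkey (av c) (Or.inl rfl), hkey (av d) (Or.inr rfl), hTnfix m r hr1 hr2]

end
end CoxProof

namespace CoxProof
noncomputable section
open scoped Classical
open CoxeterSystem List

set_option linter.unusedSectionVars false

variable {B W : Type*} [Group W] [Fintype B] [DecidableEq B]
  {M : CoxeterMatrix B} (cs : CoxeterSystem M W)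

local prefix:100 "σ" => cs.simple
local prefix:100 "π" => cs.wordProd

/-- The geometric representation of `W`. -/
def Phi : W →* ((B → ℝ) →ₗ[ℝ] (B → ℝ)) :=
  cs.lift ⟨fun c => refl0 M c, fun a b => refl0_pow_eq_one M a b⟩

theorem Phi_simple (c : B) : Phi cs (σ c) = refl0 M c :=
  cs.lift_apply_simple _ c

theorem Phi_coord {i : B} (ζ : List B) (hζ : i ∉ ζ) (x : B → ℝ) :
    (Phi cs (π ζ)) x i = x i := by
  induction ζ with
  | nil => rw [cs.wordProd_nil, map_one, Module.End.one_apply]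
  | cons c ζ ih =>
    have hc : c ≠ i := fun h => hζ (by rw [h]; exact mem_cons_self)
    have hζ' : i ∉ ζ := fun h => hζ (mem_cons_of_mem c h)
    rw [cs.wordProd_cons, map_mul, Module.End.mul_apply, Phi_simple,
      refl0_coord M hc, ih hζ']

/-- A reflection with an `i`-free conjugating word and a core `k ≠ i` cannot equal `σ i`. -/
theorem no_alien_reflection {i : B} {ζ : List B} {k : B} (hζ : i ∉ ζ) (hk : k ≠ i)
    (heq : π ζ * σ k * (π ζ)⁻¹ = σ i) : False := by
  have heq2 : π ζ * σ k = σ i * π ζ := by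
    have := congrArg (fun w => w * π ζ) heq
    simpa [mul_assoc] using this
  have hPhi : Phi cs (π ζ) * refl0 M k = refl0 M i * Phi cs (π ζ) := by
    have h := congrArg (Phi cs) heq2
    rwa [map_mul, map_mul, Phi_simple, Phi_simple] at h
  set v := Phi cs (π ζ) (av k) with hv
  have hv_i : v i = 0 := by
    rw [hv, Phi_coord cs ζ hζ]
    exact av_ne (Ne.symm hk)
  have hrefl : refl0 M i v = - v := by
    have h1 : refl0 M i v = Phi cs (π ζ) (refl0 M k (av k)) := by
      calc refl0 M i (Phi cs (π ζ) (av k))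
          = (refl0 M i * Phi cs (π ζ)) (av k) := (Module.End.mul_apply _ _ _).symm
        _ = (Phi cs (π ζ) * refl0 M k) (av k) := by rw [hPhi]
        _ = Phi cs (π ζ) (refl0 M k (av k)) := Module.End.mul_apply _ _ _
    rw [hv, h1, refl0_av_self, map_neg]
  have h3 : v - bc M i v • av i = - v := by
    rw [← refl0_apply]; exact hrefl
  have hbc : bc M i v = 0 := by
    have h7 := congrFun h3 i
    simp only [Pi.sub_apply, Pi.smul_apply, Pi.neg_apply, av_self, smul_eq_mul, mul_one,
      hv_i] at h7
    linarith
  have hv0 : v = 0 := by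
    rw [hbc, zero_smul, sub_zero] at h3
    funext b
    have h9 := congrFun h3 b
    simp only [Pi.neg_apply] at h9
    show v b = 0
    linarith
  have hfinal : av (B := B) k = 0 := by
    have hinv : Phi cs ((π ζ)⁻¹) * Phi cs (π ζ) = 1 := by
      rw [← map_mul, inv_mul_cancel, map_one]
    calc av (B := B) k = (Phi cs ((π ζ)⁻¹) * Phi cs (π ζ)) (av k) := by
          rw [hinv, Module.End.one_apply]
      _ = Phi cs ((π ζ)⁻¹) v := by rw [Module.End.mul_apply, hv]
      _ = 0 := by rw [hv0, map_zero]
  have := congrFun hfinal k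
  rw [av_self] at this
  norm_num at this

/-- Simple reflections along an edge of the Coxeter diagram do not commute. -/
theorem no_commute {i j : B} (hij : i ≠ j) (h2 : M i j ≠ 2)
    (hcomm : σ i * σ j = σ j * σ i) : False := by
  have hPhi : refl0 M i * refl0 M j = refl0 M j * refl0 M i := by
    have h := congrArg (Phi cs) hcomm
    rwa [map_mul, map_mul, Phi_simple, Phi_simple] at h
  have e1 : (refl0 M i * refl0 M j) (av i) j = - kk M i j := by
    rw [Module.End.mul_apply, refl0_coord M hij, refl0_apply, bc_av]
    simp [Pi.sub_apply, Pi.smul_apply, av_self, av_ne (Ne.symm hij)]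
  have e2 : (refl0 M j * refl0 M i) (av i) j = kk M i j := by
    rw [Module.End.mul_apply, refl0_av_self, map_neg, refl0_apply, bc_av]
    simp [Pi.sub_apply, Pi.smul_apply, Pi.neg_apply, av_self, av_ne (Ne.symm hij)]
  rw [hPhi, e2] at e1
  have h1 : M i j ≠ 1 := M.off_diagonal i j hij
  exact kk_ne_zero M h2 h1 (by linarith)
end
end CoxProof
namespace CoxProof
noncomputable section
open scoped Classical
open CoxeterSystem List

set_option linter.unusedSectionVars false

variable {B W : Type*} [Group W] {M : CoxeterMatrix B} (cs : CoxeterSystem M W)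

local prefix:100 "σ" => cs.simple
local prefix:100 "π" => cs.wordProd
local prefix:100 "ℓ" => cs.length

theorem exists_neighbor
    (hCox : ∀ i : B, ∀ l : List B, l.Nodup →
      (∀ j : B, j ∈ l ↔ M.SameComponent i j) → 3 ≤ orderOf (cs.wordProd l)) (i : B) :
    ∃ j : B, j ≠ i ∧ M i j ≠ 2 := by
  by_contra hno
  push_neg at hno
  have hcomp : ∀ x, M.SameComponent i x → x = i := by
    intro x hx
    have key : ∀ a b : B, Relation.EqvGen (fun a b => a ≠ b ∧ M a b ≠ 2) a b →
        (a = i → b = i) ∧ (b = i → a = i) := by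
      intro a b hab
      induction hab with
      | rel a b hr =>
        constructor
        · intro ha
          exfalso
          rw [ha] at hr
          exact hr.2 (hno b (fun hb => hr.1 hb.symm))
        · intro hb
          exfalso
          rw [hb] at hr
          have := hno a (fun ha => hr.1 ha)
          rw [M.symmetric i a] at this
          exact hr.2 this
      | refl a => exact ⟨id, id⟩
      | symm a b _ ih => exact ⟨ih.2, ih.1⟩
      | trans a b c _ _ ih1 ih2 => exact ⟨fun ha => ih2.1 (ih1.1 ha), fun hc => ih1.2 (ih2.2 hc)⟩
    exact (key i x hx).1 rfl
  have h3 := hCox i [i] (List.nodup_singleton i) (by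
    intro j
    rw [List.mem_singleton]
    constructor
    · rintro rfl; exact Relation.EqvGen.refl _
    · intro hj; exact hcomp j hj)
  rw [cs.wordProd_singleton] at h3
  have hdvd : orderOf (σ i) ∣ 2 := orderOf_dvd_of_pow_eq_one (cs.simple_sq i)
  have := Nat.le_of_dvd (by norm_num) hdvd
  omega

end
end CoxProof

/-- Let `(W, S)` be a finite Coxeter system, each of whose irreducible
factors has Coxeter number at least `3` (the Coxeter number of an irreducible component is
the order of the product of all the simple reflections of that component, taken in any
order).  Then every fat ideal `I` of the Bruhat order on `W` contains every element of
length at most `1`. -/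
theorem fat_ideal_contains_length_le_one {B W : Type*} [Group W] [Finite W] [Finite B]
    {M : CoxeterMatrix B} (cs : CoxeterSystem M W)
    (hCox : ∀ i : B, ∀ l : List B, l.Nodup →
      (∀ j : B, j ∈ l ↔ M.SameComponent i j) → 3 ≤ orderOf (cs.wordProd l))
    (w₀ : W) (hw₀max : ∀ w : W, cs.length w ≤ cs.length w₀)
    (hw₀uniq : ∀ w : W, cs.length w = cs.length w₀ → w = w₀)
    (I : Set W)
    (hIdeal : ∀ x y : W, cs.bruhatLE x y → y ∈ I → x ∈ I)
    (hFat : (fun w => w₀ * w) '' Iᶜ ⊆ I) :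
    ∀ w : W, cs.length w ≤ 1 → w ∈ I := by
  classical
  letI : Fintype B := Fintype.ofFinite B
  open CoxProof CoxeterSystem List in
  -- notation
  have hw0inv : w₀⁻¹ = w₀ := hw₀uniq _ (cs.length_inv w₀)
  have hw0sq : w₀ * w₀ = 1 := by nth_rewrite 2 [← hw0inv]; exact mul_inv_cancel w₀
  have hrefl_ne_one : ∀ t : W, cs.IsReflection t → t ≠ 1 := by
    intro t ht h1
    have hodd := ht.odd_length
    rw [h1, cs.length_one] at hodd
    norm_num at hodd
  have hlefty : ∀ t : W, cs.IsReflection t → cs.length (t * w₀) < cs.length w₀ := by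
    intro t ht
    rcases eq_or_lt_of_le (hw₀max (t * w₀)) with heq | hlt
    · exfalso
      exact hrefl_ne_one t ht (mul_eq_right.mp (hw₀uniq _ heq))
    · exact hlt
  have hlen_u : ∀ i : B, cs.length (w₀ * cs.simple i) + 1 = cs.length w₀ := by
    intro i
    have h1 : 1 ≤ cs.length w₀ := by
      have := hw₀max (cs.simple i)
      rw [cs.length_simple] at this
      omega
    rcases cs.length_mul_simple w₀ i with h | h
    · exfalso
      have := hw₀max (w₀ * cs.simple i)
      omega
    · omega
  have hbruhat_one : ∀ y : W, cs.bruhatLE 1 y := by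
    intro y
    obtain ⟨ω, hred, hy⟩ := cs.exists_reduced_word' y
    exact ⟨ω, hred, hy.symm, [], List.nil_sublist ω, cs.wordProd_nil⟩
  have hone : (1 : W) ∈ I := by
    by_cases hw : w₀ ∈ I
    · exact hIdeal 1 w₀ (hbruhat_one w₀) hw
    · exact hFat ⟨w₀, hw, hw0sq⟩
  -- the main claim : each simple reflection is in I
  have hsimple : ∀ i : B, cs.simple i ∈ I := by
    intro i
    by_cases hsI : cs.simple i ∈ I
    · exact hsI
    exfalso
    have hu_mem : w₀ * cs.simple i ∈ I := hFat ⟨cs.simple i, hsI, rfl⟩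
    obtain ⟨ω, hωred, hωeq⟩ := cs.exists_reduced_word' (w₀ * cs.simple i)
    by_cases hiω : i ∈ ω
    · exact hsI (hIdeal _ _
        ⟨ω, hωred, hωeq.symm, [i], List.singleton_sublist.mpr hiω, cs.wordProd_singleton i⟩
        hu_mem)
    -- i-free reduced word for w₀ * σᵢ ; extend to reduced word for w₀
    have hΩprod : cs.wordProd (ω.concat i) = w₀ := by
      rw [List.concat_eq_append, cs.wordProd_append, cs.wordProd_singleton, ← hωeq,
        mul_assoc, cs.simple_mul_simple_self, mul_one]
    have hΩlen : (ω.concat i).length = cs.length w₀ := by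
      rw [List.length_concat]
      have h1 : ω.length = cs.length (w₀ * cs.simple i) := by
        rw [hωeq]; exact hωred.symm
      have := hlen_u i
      omega
    have hΩred : cs.IsReduced (ω.concat i) := by
      rw [CoxeterSystem.IsReduced, hΩprod, hΩlen]
    have hmem : ∀ t : W, cs.IsReflection t → t ∈ cs.leftInvSeq (ω.concat i) := by
      intro t ht
      apply CoxProof.mem_leftInvSeq_of_isLeftInversion cs hΩred ht
      rw [hΩprod]
      exact hlefty t ht
    have hlis : cs.leftInvSeq (ω.concat i) =
        (cs.leftInvSeq ω).concat (cs.wordProd ω * cs.simple i * (cs.wordProd ω)⁻¹) :=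
      cs.leftInvSeq_concat ω i
    have hentry : ∀ t ∈ cs.leftInvSeq ω, ∃ ζ : List B, ∃ k : B,
        i ∉ ζ ∧ k ≠ i ∧ cs.wordProd ζ * cs.simple k * (cs.wordProd ζ)⁻¹ = t := by
      intro t htm
      obtain ⟨r, hr, hrt⟩ := List.getElem_of_mem htm
      have hrlen : r < ω.length := by
        have := hr
        rwa [cs.length_leftInvSeq ω] at this
      have hgetD : (cs.leftInvSeq ω).getD r 1 = t := by
        rw [List.getD_eq_getElem _ _ hr, hrt]
      rw [cs.getD_leftInvSeq] at hgetD
      have hget : ω[r]? = some (ω[r]) := by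
        rw [List.getElem?_eq_getElem hrlen]
      rw [hget] at hgetD
      simp only [Option.map_some, Option.getD_some] at hgetD
      refine ⟨ω.take r, ω[r], ?_, ?_, hgetD⟩
      · intro hmt
        exact hiω (List.take_subset r ω hmt)
      · intro hki
        exact hiω (hki ▸ List.getElem_mem hrlen)
    -- test the reflection σ i
    have h1 := hmem (cs.simple i) (cs.isReflection_simple i)
    rw [hlis, List.concat_eq_append, List.mem_append, List.mem_singleton] at h1
    rcases h1 with h1 | h1
    · obtain ⟨ζ, k, hζ, hk, hconj⟩ := hentry _ h1
      exact CoxProof.no_alien_reflection cs hζ hk hconj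
    · -- σ i commutes with π ω ; test σ j σ i σ j for a neighbor j
      have hcomm : cs.wordProd ω * cs.simple i * (cs.wordProd ω)⁻¹ = cs.simple i := h1.symm
      obtain ⟨j, hji, hMij⟩ := CoxProof.exists_neighbor cs hCox i
      have ht' : cs.IsReflection (cs.simple j * cs.simple i * cs.simple j) := by
        have h := (cs.isReflection_simple i).conj (cs.simple j)
        rwa [cs.inv_simple] at h
      have h2 := hmem _ ht'
      rw [hlis, List.concat_eq_append, List.mem_append, List.mem_singleton] at h2
      rcases h2 with h2 | h2
      · obtain ⟨ζ, k, hζ, hk, hconj⟩ := hentry _ h2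
        refine CoxProof.no_alien_reflection cs (ζ := j :: ζ) (k := k) ?_ hk ?_
        · intro hmem'
          rcases List.mem_cons.mp hmem' with h | h
          · exact hji h.symm
          · exact hζ h
        · rw [cs.wordProd_cons, mul_inv_rev, cs.inv_simple]
          calc cs.simple j * cs.wordProd ζ * cs.simple k * ((cs.wordProd ζ)⁻¹ * cs.simple j)
              = cs.simple j * (cs.wordProd ζ * cs.simple k * (cs.wordProd ζ)⁻¹) *
                cs.simple j := by group
            _ = cs.simple j * (cs.simple j * cs.simple i * cs.simple j) * cs.simple j := by
                rw [hconj]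
            _ = cs.simple i := by
                simp [mul_assoc, cs.simple_mul_simple_self, cs.simple_mul_simple_cancel_left]
      · -- σ j σ i σ j = σ i , i.e. they commute : contradiction
        rw [hcomm] at h2
        have hc2 : cs.simple j * cs.simple i = cs.simple i * cs.simple j := by
          have h3 := congrArg (fun x => x * cs.simple j) h2
          simpa [mul_assoc, cs.simple_mul_simple_self] using h3
        exact CoxProof.no_commute cs (Ne.symm hji) hMij hc2.symm
  -- finish
  intro w hw
  rcases Nat.le_one_iff_eq_zero_or_eq_one.mp hw with h0 | h1
  · rw [cs.length_eq_zero_iff.mp h0]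
    exact hone
  · obtain ⟨i, rfl⟩ := cs.length_eq_one_iff.mp h1
    exact hsimple i
end

section
/- Let n >= 2 and 1 <= k <= n-1. The permutation z_k in S_n has exactly (n-1)(n-2)/2 inversions; that is, l(z_k) = (n-1)(n-2)/2, independently of k. -/
/-- `ap σ i` is the value, in one-indexed notation, of the permutation `σ ∈ Sₙ` at the
one-indexed position `i`; i.e. writing `σ` as the tuple `(σ(1), …, σ(n))` of elements of
`{1, …, n}`, `ap σ i = σ(i)` for `1 ≤ i ≤ n` (and junk value `0` otherwise). -/
def ap {n : ℕ} (σ : Equiv.Perm (Fin n)) (i : ℕ) : ℕ :=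
  if h : 1 ≤ i ∧ i ≤ n then (σ ⟨i - 1, by omega⟩ : ℕ) + 1 else 0

/-- The number of inversions of a permutation in `Sₙ`, which equals its Coxeter length
with respect to the generating set of adjacent transpositions. -/
def invCount {n : ℕ} (σ : Equiv.Perm (Fin n)) : ℕ :=
  (Finset.univ.filter fun p : Fin n × Fin n => p.1 < p.2 ∧ σ p.2 < σ p.1).card

/-- A permutation is an adjacent transposition `sᵢ = (i, i+1)`. -/
def IsAdjSwap {n : ℕ} (σ : Equiv.Perm (Fin n)) : Prop :=
  ∃ i j : Fin n, (i : ℕ) + 1 = (j : ℕ) ∧ σ = Equiv.swap i j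

/-- A word in the adjacent transpositions. -/
def IsWord {n : ℕ} (l : List (Equiv.Perm (Fin n))) : Prop := ∀ τ ∈ l, IsAdjSwap τ

/-- A reduced word: a word in the adjacent transpositions of minimal length among all
words representing the same permutation. -/
def IsReducedWord {n : ℕ} (l : List (Equiv.Perm (Fin n))) : Prop :=
  IsWord l ∧ ∀ l' : List (Equiv.Perm (Fin n)), IsWord l' → l'.prod = l.prod →
    l.length ≤ l'.length

/-- The Bruhat order on `Sₙ`: `x ≤ y` iff `x` is the product of a subword of some
reduced word for `y` in the adjacent transpositions. -/
def bruhatLE {n : ℕ} (x y : Equiv.Perm (Fin n)) : Prop :=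
  ∃ l : List (Equiv.Perm (Fin n)), IsReducedWord l ∧ l.prod = y ∧
    ∃ l' : List (Equiv.Perm (Fin n)), l'.Sublist l ∧ l'.prod = x

/-- The one-indexed tuple of the permutation `z_k ∈ Sₙ`, namely `(k, …, k+1)` where the
middle entries are the elements of `{1, …, n} \ {k, k+1}` in decreasing order:
`z_k(1) = k`, `z_k(n) = k+1`, `z_k(i) = n-i+2` for `1 < i ≤ n-k`, and `z_k(i) = n-i`
for `n-k < i < n`. -/
def zVal (n k i : ℕ) : ℕ :=
  if i = 1 then k else if i = n then k + 1 else if i ≤ n - k then n - i + 2 else n - i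

open Finset

lemma zk_sum (n k : ℕ) (hn : 2 ≤ n) (hk1 : 1 ≤ k) (hk2 : k ≤ n - 1) :
    ∑ i ∈ range n, ∑ j ∈ range n,
      (if i < j ∧ zVal n k (j+1) < zVal n k (i+1) then 1 else 0) = (n-1)*(n-2)/2 := by
  set g : ℕ → ℕ := fun i => ∑ j ∈ range n,
      (if i < j ∧ zVal n k (j+1) < zVal n k (i+1) then 1 else 0) with hgdef
  have hg : ∀ i, g i = ((range n).filter
      fun j => i < j ∧ zVal n k (j+1) < zVal n k (i+1)).card := by
    intro i; rw [Finset.card_filter]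
  have h0 : g 0 = k - 1 := by
    rw [hg]
    have : ((range n).filter fun j => 0 < j ∧ zVal n k (j+1) < zVal n k (0+1))
        = Icc (n-k) (n-2) := by
      ext j
      simp only [Finset.mem_filter, Finset.mem_range, Finset.mem_Icc, zVal]
      split_ifs <;> omega
    rw [this, Nat.card_Icc]; omega
  have hlast : g (n-1) = 0 := by
    rw [hg]
    have : ((range n).filter fun j => n-1 < j ∧ zVal n k (j+1) < zVal n k (n-1+1)) = ∅ := by
      ext j
      simp only [Finset.mem_filter, Finset.mem_range, Finset.notMem_empty, iff_false,
        not_and]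
      intro hj hj2; omega
    rw [this]; simp
  have hmid : ∀ i ∈ Icc 1 (n-2), g i = (n-2-i) + (if i ≤ n-k-1 then 1 else 0) := by
    intro i hi
    rw [Finset.mem_Icc] at hi
    rw [hg]
    by_cases hcase : i ≤ n-k-1
    · have : ((range n).filter fun j => i < j ∧ zVal n k (j+1) < zVal n k (i+1))
          = Icc (i+1) (n-1) := by
        ext j
        simp only [Finset.mem_filter, Finset.mem_range, Finset.mem_Icc]
        simp only [Finset.mem_filter, Finset.mem_range, Finset.mem_Icc, zVal]
        split_ifs <;> omega
      rw [this, Nat.card_Icc, if_pos hcase]; omega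
    · have : ((range n).filter fun j => i < j ∧ zVal n k (j+1) < zVal n k (i+1))
          = Icc (i+1) (n-2) := by
        ext j
        simp only [Finset.mem_filter, Finset.mem_range, Finset.mem_Icc]
        simp only [Finset.mem_filter, Finset.mem_range, Finset.mem_Icc, zVal]
        split_ifs <;> omega
      rw [this, Nat.card_Icc, if_neg hcase]; omega
  have hrange : range n = insert 0 (insert (n-1) (Icc 1 (n-2))) := by
    ext x
    simp only [Finset.mem_range, Finset.mem_insert, Finset.mem_Icc]
    omega
  have hsplit : ∑ i ∈ range n, g i
      = g 0 + (g (n-1) + ∑ i ∈ Icc 1 (n-2), g i) := by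
    rw [hrange, Finset.sum_insert, Finset.sum_insert]
    · simp only [Finset.mem_Icc]; omega
    · simp only [Finset.mem_insert, Finset.mem_Icc]; omega
  have hmidsum : ∑ i ∈ Icc 1 (n-2), g i
      = (∑ i ∈ Icc 1 (n-2), (n-2-i)) + (n-k-1) := by
    rw [Finset.sum_congr rfl hmid, Finset.sum_add_distrib]
    congr 1
    have hfil : ((Icc 1 (n-2)).filter fun i => i ≤ n-k-1) = Icc 1 (n-k-1) := by
      ext x
      simp only [Finset.mem_filter, Finset.mem_Icc]
      omega
    rw [← Finset.sum_filter, hfil, Finset.sum_const, smul_eq_mul, mul_one, Nat.card_Icc]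
    omega
  have himg : Icc 1 (n-2) = Finset.image (· + 1) (range (n-2)) := by
    ext x
    simp only [Finset.mem_Icc, Finset.mem_image, Finset.mem_range]
    constructor
    · rintro ⟨h1, h2⟩; exact ⟨x-1, by omega, by omega⟩
    · rintro ⟨y, hy, rfl⟩; omega
  have hA : ∑ i ∈ Icc 1 (n-2), (n-2-i) = ∑ t ∈ range (n-2), t := by
    rw [himg, Finset.sum_image (by intro a _ b _ h; beta_reduce at h; omega)]
    rw [← Finset.sum_range_reflect]
    apply Finset.sum_congr rfl
    intro t ht
    rw [Finset.mem_range] at ht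
    omega
  have hGauss : (∑ t ∈ range (n-2), t) * 2 = (n-2) * (n-2-1) := Finset.sum_range_id_mul_two _
  obtain ⟨m, rfl⟩ : ∃ m, n = m + 2 := ⟨n-2, by omega⟩
  have hq : (m+2-1) * (m+2-2) = (m+2-2) * (m+2-2-1) + 2*m := by
    rcases m with _ | t
    · rfl
    · have e1 : t+1+2-1 = t+2 := by omega
      have e2 : t+1+2-2 = t+1 := by omega
      have e3 : t+1+2-2-1 = t := by omega
      have e4 : t+1-1 = t := by omega
      rw [e1, e2]; rw [e4]; ring
  rw [hsplit, h0, hlast, hmidsum, hA]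
  omega

/-- Let `n ≥ 2` and `1 ≤ k ≤ n - 1`.  The permutation `z_k ∈ Sₙ` has
exactly `(n-1)(n-2)/2` inversions, i.e. `ℓ(z_k) = (n-1)(n-2)/2`, independently of `k`. -/
theorem zk_length (n k : ℕ) (hn : 2 ≤ n) (hk1 : 1 ≤ k) (hk2 : k ≤ n - 1)
    (z : Equiv.Perm (Fin n))
    (hz : ∀ i : ℕ, 1 ≤ i → i ≤ n → ap z i = zVal n k i) :
    invCount z = (n - 1) * (n - 2) / 2 := by
  have hv : ∀ i : Fin n, (z i : ℕ) + 1 = zVal n k ((i : ℕ) + 1) := by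
    intro i
    have h := hz ((i : ℕ) + 1) (by omega) (by omega)
    unfold ap at h
    rw [dif_pos ⟨by omega, by omega⟩] at h
    have he : (⟨(i : ℕ) + 1 - 1, by omega⟩ : Fin n) = i := by
      apply Fin.ext; simp
    rwa [he] at h
  unfold invCount
  rw [Finset.card_filter, Fintype.sum_prod_type]
  have hiff : ∀ i j : Fin n, ((i < j ∧ z j < z i) ↔
      ((i : ℕ) < (j : ℕ) ∧ zVal n k ((j : ℕ)+1) < zVal n k ((i : ℕ)+1))) := by
    intro i j
    rw [Fin.lt_def, Fin.lt_def, ← hv i, ← hv j]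
    omega
  calc (∑ i : Fin n, ∑ j : Fin n, if (i, j).1 < (i, j).2 ∧ z (i, j).2 < z (i, j).1 then 1 else 0)
      = ∑ i : Fin n, ∑ j : Fin n,
        (if ((i : ℕ) < (j : ℕ) ∧ zVal n k ((j : ℕ)+1) < zVal n k ((i : ℕ)+1)) then 1 else 0) := by
        apply Finset.sum_congr rfl; intro i _
        apply Finset.sum_congr rfl; intro j _
        exact if_congr (hiff i j) rfl rfl
    _ = ∑ i ∈ range n, ∑ j ∈ range n,
        (if i < j ∧ zVal n k (j+1) < zVal n k (i+1) then 1 else 0) := by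
        rw [← Fin.sum_univ_eq_sum_range (fun i => ∑ j ∈ range n,
          (if i < j ∧ zVal n k (j+1) < zVal n k (i+1) then 1 else 0))]
        apply Finset.sum_congr rfl; intro i _
        rw [← Fin.sum_univ_eq_sum_range (fun j =>
          (if (i : ℕ) < j ∧ zVal n k (j+1) < zVal n k ((i : ℕ)+1) then 1 else 0))]
    _ = (n - 1) * (n - 2) / 2 := zk_sum n k hn hk1 hk2
end

section
/- Let n >= 2 and 1 <= i < j <= n. Every permutation x in S_n with x(1) = i and x(n) = j has at least n + i - j - 1 inversions, and this bound is attained: the permutation whose tuple is (i, 1, 2, ..., \hat{i}, ..., \hat{j}, ..., n, j), where the middle entries are the elements of {1,...,n} \ {i, j} in increasing order, has exactly n + i - j - 1 inversions. In particular the minimal length of an element of the coset W(i,j) = { x in S_n : x(1) = i, x(n) = j } is n + i - j - 1. -/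
lemma my_ap_eq {n : ℕ} (σ : Equiv.Perm (Fin n)) (p : Fin n) :
    ap σ ((p : ℕ) + 1) = (σ p : ℕ) + 1 := by
  have hc : 1 ≤ (p : ℕ) + 1 ∧ (p : ℕ) + 1 ≤ n := ⟨by omega, p.2⟩
  rw [ap, dif_pos hc]
  simp only [Nat.add_sub_cancel, Fin.eta]

lemma my_key {n i j : ℕ} (hn : 2 ≤ n) (hi : 1 ≤ i) (hij : i < j) (hj : j ≤ n)
    (x : Equiv.Perm (Fin n))
    (hx1 : (x ⟨0, by omega⟩ : ℕ) + 1 = i) (hxn : (x ⟨n - 1, by omega⟩ : ℕ) + 1 = j) :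
    ∃ U : Finset (Fin n × Fin n), U.card = (i - 1) + (n - j) ∧
      (∀ p ∈ U, p.1 < p.2 ∧ x p.2 < x p.1) ∧
      (∀ p : Fin n × Fin n, p.1 < p.2 → x p.2 < x p.1 →
        ((p.1 : ℕ) = 0 ∨ (p.2 : ℕ) = n - 1) → p ∈ U) := by
  have h0 : (0 : ℕ) < n := by omega
  set z : Fin n := ⟨0, h0⟩ with hz
  set e : Fin n := ⟨n - 1, by omega⟩ with he
  set A : Finset (Fin n × Fin n) :=
    (Finset.univ.filter fun v : Fin n => (v : ℕ) < i - 1).image fun v => (z, x⁻¹ v) with hA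
  set B : Finset (Fin n × Fin n) :=
    (Finset.univ.filter fun v : Fin n => j - 1 < (v : ℕ)).image fun v => (x⁻¹ v, e) with hB
  have hx1' : (x z : ℕ) + 1 = i := hx1
  have hxn' : (x e : ℕ) + 1 = j := hxn
  have hiA : Function.Injective fun v : Fin n => ((z, x⁻¹ v) : Fin n × Fin n) := by
    intro a b hab
    exact x⁻¹.injective (congrArg Prod.snd hab)
  have hiB : Function.Injective fun v : Fin n => ((x⁻¹ v, e) : Fin n × Fin n) := by
    intro a b hab
    exact x⁻¹.injective (congrArg Prod.fst hab)
  have cA : A.card = i - 1 := by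
    rw [hA, Finset.card_image_of_injective _ hiA]
    have hset : (Finset.univ.filter fun v : Fin n => (v : ℕ) < i - 1)
        = Finset.Iio (⟨i - 1, by omega⟩ : Fin n) := by
      ext v; simp [Fin.lt_def]
    rw [hset, Fin.card_Iio]
  have cB : B.card = n - j := by
    rw [hB, Finset.card_image_of_injective _ hiB]
    have hset : (Finset.univ.filter fun v : Fin n => j - 1 < (v : ℕ))
        = Finset.Ioi (⟨j - 1, by omega⟩ : Fin n) := by
      ext v; simp [Fin.lt_def]
    rw [hset, Fin.card_Ioi]
    simp
    omega
  have hd : Disjoint A B := by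
    rw [Finset.disjoint_left]
    rintro p hp hq
    rw [hA, Finset.mem_image] at hp
    rw [hB, Finset.mem_image] at hq
    obtain ⟨v, hv, rfl⟩ := hp
    obtain ⟨w, hw, hpq⟩ := hq
    simp only [Finset.mem_filter, Finset.mem_univ, true_and] at hv hw
    have h1 : x⁻¹ w = z := congrArg Prod.fst hpq
    have h2 : w = x z := by rw [← h1]; simp
    have h3 : (w : ℕ) = i - 1 := by rw [h2]; omega
    omega
  refine ⟨A ∪ B, ?_, ?_, ?_⟩
  · rw [Finset.card_union_of_disjoint hd, cA, cB]
  · intro p hp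
    rcases Finset.mem_union.mp hp with hp | hp
    · obtain ⟨v, hv, rfl⟩ := Finset.mem_image.mp hp
      simp only [Finset.mem_filter, Finset.mem_univ, true_and] at hv
      have hne : x⁻¹ v ≠ z := by
        intro h
        have : v = x z := by rw [← h]; simp
        omega
      constructor
      · rw [Fin.lt_def]
        have : (x⁻¹ v : ℕ) ≠ 0 := fun h => hne (Fin.ext h)
        simp only [hz]
        omega
      · rw [Fin.lt_def]
        simp only [Equiv.Perm.inv_def, Equiv.apply_symm_apply]
        omega
    · obtain ⟨w, hw, rfl⟩ := Finset.mem_image.mp hp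
      simp only [Finset.mem_filter, Finset.mem_univ, true_and] at hw
      have hne : x⁻¹ w ≠ e := by
        intro h
        have : w = x e := by rw [← h]; simp
        omega
      constructor
      · rw [Fin.lt_def]
        have h1 : (x⁻¹ w : ℕ) ≠ n - 1 := fun h => hne (Fin.ext h)
        have h2 : (x⁻¹ w : ℕ) < n := (x⁻¹ w).2
        simp only [he]
        omega
      · rw [Fin.lt_def]
        simp only [Equiv.Perm.inv_def, Equiv.apply_symm_apply]
        omega
  · rintro ⟨a, b⟩ hab hinv hcase
    dsimp only at hab hinv hcase
    rcases hcase with h1 | h2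
    · have ha : a = z := Fin.ext (by simpa using h1)
      subst ha
      apply Finset.mem_union_left
      rw [hA, Finset.mem_image]
      refine ⟨x b, ?_, by simp⟩
      simp only [Finset.mem_filter, Finset.mem_univ, true_and]
      rw [Fin.lt_def] at hinv
      omega
    · have hb : b = e := Fin.ext (by simpa using h2)
      subst hb
      apply Finset.mem_union_right
      rw [hB, Finset.mem_image]
      refine ⟨x a, ?_, by simp⟩
      simp only [Finset.mem_filter, Finset.mem_univ, true_and]
      rw [Fin.lt_def] at hinv
      omega

def myMid (n i j p : ℕ) : ℕ :=
  if p = 0 then i - 1 else if p = n - 1 then j - 1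
  else if p ≤ i - 1 then p - 1 else if p + 2 ≤ j then p else p + 1

lemma myMid_lt {n i j : ℕ} (hn : 2 ≤ n) (hi : 1 ≤ i) (hij : i < j) (hj : j ≤ n)
    {p : ℕ} (hp : p < n) : myMid n i j p < n := by
  unfold myMid; split_ifs <;> omega

lemma myMid_inj {n i j : ℕ} (hn : 2 ≤ n) (hi : 1 ≤ i) (hij : i < j) (hj : j ≤ n)
    {p q : ℕ} (hp : p < n) (hq : q < n) (h : myMid n i j p = myMid n i j q) : p = q := by
  unfold myMid at h; split_ifs at h <;> omega

lemma myMid_mono {n i j : ℕ} (hn : 2 ≤ n) (hi : 1 ≤ i) (hij : i < j) (hj : j ≤ n)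
    {p q : ℕ} (hp : 1 ≤ p) (hpq : p < q) (hq : q < n - 1) :
    myMid n i j p < myMid n i j q := by
  unfold myMid; split_ifs <;> omega

lemma my_exists {n i j : ℕ} (hn : 2 ≤ n) (hi : 1 ≤ i) (hij : i < j) (hj : j ≤ n) :
    ∃ m : Equiv.Perm (Fin n), ap m 1 = i ∧ ap m n = j ∧
      ∀ p q : ℕ, 1 < p → p < q → q < n → ap m p < ap m q := by
  set g : Fin n → Fin n := fun p => ⟨myMid n i j p, myMid_lt hn hi hij hj p.2⟩ with hg
  have ginj : Function.Injective g := by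
    intro p q h
    exact Fin.ext (myMid_inj hn hi hij hj p.2 q.2 (congrArg Fin.val h))
  set m : Equiv.Perm (Fin n) := Equiv.ofBijective g (Finite.injective_iff_bijective.mp ginj)
    with hm
  have happ : ∀ p : Fin n, (m p : ℕ) = myMid n i j p := by
    intro p
    rw [hm]
    rfl
  refine ⟨m, ?_, ?_, ?_⟩
  · have h := my_ap_eq m ⟨0, by omega⟩
    simp only [Fin.val_mk, zero_add] at h
    rw [h, happ]
    simp only [Fin.val_mk]
    have hv : myMid n i j 0 = i - 1 := by unfold myMid; rw [if_pos rfl]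
    omega
  · have h := my_ap_eq m ⟨n - 1, by omega⟩
    simp only [Fin.val_mk] at h
    rw [show n - 1 + 1 = n from by omega] at h
    rw [h, happ]
    simp only [Fin.val_mk]
    have hv : myMid n i j (n - 1) = j - 1 := by
      unfold myMid; rw [if_neg (by omega), if_pos rfl]
    omega
  · intro p q hp hpq hq
    obtain ⟨P, rfl⟩ : ∃ P, p = P + 1 := ⟨p - 1, by omega⟩
    obtain ⟨Q, rfl⟩ : ∃ Q, q = Q + 1 := ⟨q - 1, by omega⟩
    have hP := my_ap_eq m ⟨P, by omega⟩
    have hQ := my_ap_eq m ⟨Q, by omega⟩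
    simp only [Fin.val_mk] at hP hQ
    rw [hP, hQ, happ, happ]
    simp only [Fin.val_mk]
    have := myMid_mono hn hi hij hj (p := P) (q := Q) (by omega) (by omega) (by omega)
    omega

lemma my_lower {n i j : ℕ} (hn : 2 ≤ n) (hi : 1 ≤ i) (hij : i < j) (hj : j ≤ n)
    (x : Equiv.Perm (Fin n)) (hx1 : ap x 1 = i) (hxn : ap x n = j) :
    n + i - j - 1 ≤ invCount x := by
  have hx1' : (x ⟨0, by omega⟩ : ℕ) + 1 = i := by
    have h := my_ap_eq x ⟨0, by omega⟩
    simp only [Fin.val_mk, zero_add] at h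
    rw [← h, hx1]
  have hxn' : (x ⟨n - 1, by omega⟩ : ℕ) + 1 = j := by
    have h := my_ap_eq x ⟨n - 1, by omega⟩
    simp only [Fin.val_mk] at h
    rw [← h, show n - 1 + 1 = n by omega, hxn]
  obtain ⟨U, hcard, hsub, -⟩ := my_key hn hi hij hj x hx1' hxn'
  have hUS : U ⊆ Finset.univ.filter fun p : Fin n × Fin n => p.1 < p.2 ∧ x p.2 < x p.1 :=
    fun p hp => Finset.mem_filter.mpr ⟨Finset.mem_univ _, hsub p hp⟩
  have := Finset.card_le_card hUS
  unfold invCount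
  omega

lemma my_exact {n i j : ℕ} (hn : 2 ≤ n) (hi : 1 ≤ i) (hij : i < j) (hj : j ≤ n)
    (x : Equiv.Perm (Fin n)) (hx1 : ap x 1 = i) (hxn : ap x n = j)
    (hmono : ∀ p q : ℕ, 1 < p → p < q → q < n → ap x p < ap x q) :
    invCount x = n + i - j - 1 := by
  have hx1' : (x ⟨0, by omega⟩ : ℕ) + 1 = i := by
    have h := my_ap_eq x ⟨0, by omega⟩
    simp only [Fin.val_mk, zero_add] at h
    rw [← h, hx1]
  have hxn' : (x ⟨n - 1, by omega⟩ : ℕ) + 1 = j := by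
    have h := my_ap_eq x ⟨n - 1, by omega⟩
    simp only [Fin.val_mk] at h
    rw [← h, show n - 1 + 1 = n by omega, hxn]
  obtain ⟨U, hcard, hsub, hmem⟩ := my_key hn hi hij hj x hx1' hxn'
  have hUS : (Finset.univ.filter fun p : Fin n × Fin n => p.1 < p.2 ∧ x p.2 < x p.1) = U := by
    ext ⟨a, b⟩
    simp only [Finset.mem_filter, Finset.mem_univ, true_and]
    constructor
    · rintro ⟨h1, h2⟩
      refine hmem _ h1 h2 ?_
      by_contra hcon
      push_neg at hcon
      dsimp only at hcon
      obtain ⟨ha, hb⟩ := hcon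
      have hP := my_ap_eq x a
      have hQ := my_ap_eq x b
      have hlt : ap x ((a : ℕ) + 1) < ap x ((b : ℕ) + 1) :=
        hmono _ _ (by omega) (by rw [Fin.lt_def] at h1; omega) (by have := b.2; omega)
      rw [hP, hQ] at hlt
      rw [Fin.lt_def] at h2
      omega
    · intro h
      exact hsub _ h
  unfold invCount
  rw [hUS, hcard]
  omega

/-- Let `n ≥ 2` and `1 ≤ i < j ≤ n`.  Every permutation `x ∈ Sₙ` with
`x(1) = i` and `x(n) = j` has at least `n + i - j - 1` inversions; the bound is attained,
and it is attained exactly by the permutation `(i, 1, 2, …, î, …, ĵ, …, n, j)` whose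
middle entries are the elements of `{1, …, n} \ {i, j}` in increasing order.  In
particular the minimal length of an element of `W(i,j) = {x : x(1) = i, x(n) = j}` is
`n + i - j - 1`. -/
theorem min_length_in_coset (n i j : ℕ) (hn : 2 ≤ n) (hi : 1 ≤ i) (hij : i < j)
    (hj : j ≤ n) :
    (∀ x : Equiv.Perm (Fin n), ap x 1 = i → ap x n = j →
        n + i - j - 1 ≤ invCount x) ∧
    (∀ m : Equiv.Perm (Fin n), ap m 1 = i → ap m n = j →
        (∀ p q : ℕ, 1 < p → p < q → q < n → ap m p < ap m q) →
        invCount m = n + i - j - 1) ∧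
    (∃ m : Equiv.Perm (Fin n), ap m 1 = i ∧ ap m n = j ∧
        ∀ p q : ℕ, 1 < p → p < q → q < n → ap m p < ap m q) :=
  ⟨fun x hx1 hxn => my_lower hn hi hij hj x hx1 hxn,
   fun m h1 h2 h3 => my_exact hn hi hij hj m h1 h2 h3,
   my_exists hn hi hij hj⟩
end

section
/- Let n >= 1 and let lambda be the permutation in S_{2n} defined by lambda(i) = 2n+1-i for 1 <= i <= n-1, lambda(i) = 2n-i for n <= i <= 2n-1, and lambda(2n) = n+1. Then for every w in S_{2n}: w <= lambda in the Bruhat order if and only if w(2n) >= n+1. Consequently the set I_{2n} := { w in S_{2n} : w(2n) > n } equals the principal ideal { w : w <= lambda } (so it is an ideal), and it is balanced: w_0 * (S_{2n} \ I_{2n}) = I_{2n}, where w_0(i) = 2n+1-i. -/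
/-- The one-indexed tuple of the permutation `λ ∈ S₂ₙ`, namely
`(2n, 2n-1, …, n+2, n, n-1, …, 2, 1, n+1)`: `λ(i) = 2n+1-i` for `1 ≤ i ≤ n-1`,
`λ(i) = 2n-i` for `n ≤ i ≤ 2n-1`, and `λ(2n) = n+1`. -/
def lamVal (n i : ℕ) : ℕ :=
  if i ≤ n - 1 then 2 * n + 1 - i else if i ≤ 2 * n - 1 then 2 * n - i else n + 1

namespace BAux
open Finset Equiv

variable {N : ℕ}

def sw (i : ℕ) (h : i + 1 < N) : Equiv.Perm (Fin N) := Equiv.swap ⟨i, by omega⟩ ⟨i+1, h⟩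

lemma sw_isAdjSwap (i : ℕ) (h : i + 1 < N) : IsAdjSwap (sw i h) :=
  ⟨⟨i, by omega⟩, ⟨i+1, h⟩, rfl, rfl⟩

lemma sw_apply_val (i : ℕ) (h : i + 1 < N) (u : Fin N) :
    ((sw i h) u : ℕ) = if (u : ℕ) = i then i+1 else if (u : ℕ) = i+1 then i else u := by
  rw [sw, Equiv.swap_apply_def]
  split_ifs with h1 h2 h3 h4 h5 <;> simp_all [Fin.ext_iff]

lemma sw_mul_sw (i : ℕ) (h : i + 1 < N) : sw i h * sw i h = 1 := Equiv.swap_mul_self _ _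

lemma invCount_sw_mul_of_lt {i : ℕ} (h : i + 1 < N) (x : Equiv.Perm (Fin N))
    (hx : ((x⁻¹ ⟨i, by omega⟩ : Fin N) : ℕ) < ((x⁻¹ ⟨i+1, h⟩ : Fin N) : ℕ)) :
    invCount (sw i h * x) = invCount x + 1 := by
  set a : Fin N := x⁻¹ ⟨i, by omega⟩ with ha
  set b : Fin N := x⁻¹ ⟨i+1, h⟩ with hb
  have hxa : (x a : ℕ) = i := by rw [ha]; simp
  have hxb : (x b : ℕ) = i + 1 := by rw [hb]; simp
  have hset : (Finset.univ.filter fun p : Fin N × Fin N =>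
        p.1 < p.2 ∧ (sw i h * x) p.2 < (sw i h * x) p.1)
      = insert (a, b) (Finset.univ.filter fun p : Fin N × Fin N =>
        p.1 < p.2 ∧ x p.2 < x p.1) := by
    ext p
    obtain ⟨p₁, p₂⟩ := p
    have e1 : (p₁ = a) ↔ ((x p₁ : ℕ) = i) := by
      rw [ha, Equiv.Perm.eq_inv_iff_eq, Fin.ext_iff]
    have e2 : (p₂ = b) ↔ ((x p₂ : ℕ) = i + 1) := by
      rw [hb, Equiv.Perm.eq_inv_iff_eq, Fin.ext_iff]
    have f1 : (x p₁ : ℕ) = i → (p₁ : ℕ) = (a : ℕ) := fun hh => by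
      rw [e1.mpr hh]
    have f2 : (x p₂ : ℕ) = i + 1 → (p₂ : ℕ) = (b : ℕ) := fun hh => by
      rw [e2.mpr hh]
    have f3 : (x p₁ : ℕ) = i + 1 → (p₁ : ℕ) = (b : ℕ) := fun hh => by
      have : p₁ = b := by rw [hb, Equiv.Perm.eq_inv_iff_eq, Fin.ext_iff]; exact hh
      rw [this]
    have f4 : (x p₂ : ℕ) = i → (p₂ : ℕ) = (a : ℕ) := fun hh => by
      have : p₂ = a := by rw [ha, Equiv.Perm.eq_inv_iff_eq, Fin.ext_iff]; exact hh
      rw [this]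
    have finj : (x p₁ : ℕ) = (x p₂ : ℕ) → (p₁ : ℕ) = (p₂ : ℕ) := fun hh => by
      have : x p₁ = x p₂ := Fin.ext hh
      rw [x.injective this]
    simp only [mem_filter, mem_univ, true_and, mem_insert, Prod.mk.injEq,
      Equiv.Perm.mul_apply, Fin.lt_def, sw_apply_val, e1, e2]
    split_ifs <;> omega
  have hnotmem : (a, b) ∉ (Finset.univ.filter fun p : Fin N × Fin N =>
      p.1 < p.2 ∧ x p.2 < x p.1) := by
    simp only [mem_filter, mem_univ, true_and, Fin.lt_def, not_and]
    intro _
    omega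
  rw [invCount, invCount, hset, Finset.card_insert_of_notMem hnotmem]

lemma invCount_sw_mul_of_gt {i : ℕ} (h : i + 1 < N) (x : Equiv.Perm (Fin N))
    (hx : ((x⁻¹ ⟨i+1, h⟩ : Fin N) : ℕ) < ((x⁻¹ ⟨i, by omega⟩ : Fin N) : ℕ)) :
    invCount x = invCount (sw i h * x) + 1 := by
  have key := invCount_sw_mul_of_lt h (sw i h * x) ?_
  · rw [← mul_assoc, sw_mul_sw, one_mul] at key
    exact key
  · have hinv : (sw i h * x)⁻¹ = x⁻¹ * sw i h := by
      rw [mul_inv_rev, sw, Equiv.swap_inv, ← sw]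
    rw [hinv]
    simp only [Equiv.Perm.mul_apply]
    have s1 : sw i h ⟨i, by omega⟩ = ⟨i+1, h⟩ := by
      apply Fin.ext; rw [sw_apply_val]; simp
    have s2 : (sw i h) ⟨i+1, h⟩ = ⟨i, by omega⟩ := by
      apply Fin.ext; rw [sw_apply_val]; simp
    rw [s1, s2]
    exact hx

lemma isAdjSwap_iff {t : Equiv.Perm (Fin N)} (ht : IsAdjSwap t) :
    ∃ (i : ℕ) (h : i + 1 < N), t = sw i h := by
  obtain ⟨u, v, huv, rfl⟩ := ht
  refine ⟨u, by omega, ?_⟩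
  rw [sw]
  congr 1 <;> apply Fin.ext <;> simp [huv.symm]

lemma invCount_one : invCount (1 : Equiv.Perm (Fin N)) = 0 := by
  rw [invCount, Finset.card_eq_zero, Finset.filter_eq_empty_iff]
  rintro ⟨p₁, p₂⟩ _
  simp only [Equiv.Perm.one_apply, not_and]
  intro h1 h2
  exact absurd h2 (not_lt.mpr h1.le)

lemma invCount_sw_mul_cases {i : ℕ} (h : i + 1 < N) (x : Equiv.Perm (Fin N)) :
    invCount (sw i h * x) = invCount x + 1 ∨ invCount x = invCount (sw i h * x) + 1 := by
  rcases lt_trichotomy ((x⁻¹ ⟨i, by omega⟩ : Fin N) : ℕ) ((x⁻¹ ⟨i+1, h⟩ : Fin N) : ℕ) with hlt | heq | hgt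
  · exact Or.inl (invCount_sw_mul_of_lt h x hlt)
  · exfalso
    have : x⁻¹ ⟨i, by omega⟩ = x⁻¹ ⟨i+1, h⟩ := Fin.ext heq
    have := x⁻¹.injective this
    simp [Fin.ext_iff] at this
  · exact Or.inr (invCount_sw_mul_of_gt h x hgt)

lemma invCount_prod_le (l : List (Equiv.Perm (Fin N))) (hw : IsWord l) :
    invCount l.prod ≤ l.length := by
  induction l with
  | nil => simp [invCount_one]
  | cons t r ih =>
    have ht := hw t (List.mem_cons_self (a := t) (l := r))
    obtain ⟨i, h, rfl⟩ := isAdjSwap_iff ht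
    have hr := ih (fun τ hτ => hw τ (List.mem_cons_of_mem _ hτ))
    rw [List.prod_cons, List.length_cons]
    rcases invCount_sw_mul_cases h r.prod with h1 | h1 <;> omega

lemma exists_descent (x : Equiv.Perm (Fin N)) (hx : x ≠ 1) :
    ∃ (i : ℕ) (h : i + 1 < N), ((x⁻¹ ⟨i+1, h⟩ : Fin N) : ℕ) < ((x⁻¹ ⟨i, by omega⟩ : Fin N) : ℕ) := by
  by_contra hc
  push_neg at hc
  have hmono : StrictMono (⇑(x⁻¹) : Fin N → Fin N) := by
    cases N with
    | zero => intro u; exact absurd u.2 (by omega)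
    | succ M =>
      rw [Fin.strictMono_iff_lt_succ]
      intro j
      have h : (j : ℕ) + 1 < M + 1 := by omega
      have hle := hc j h
      have hne : x⁻¹ (⟨j, by omega⟩ : Fin (M+1)) ≠ x⁻¹ ⟨(j : ℕ)+1, h⟩ := by
        intro he
        have := x⁻¹.injective he
        simp [Fin.ext_iff] at this
      have hcast : j.castSucc = (⟨j, by omega⟩ : Fin (M+1)) := by apply Fin.ext; simp
      have hsucc : j.succ = (⟨(j : ℕ)+1, h⟩ : Fin (M+1)) := by apply Fin.ext; simp
      rw [hcast, hsucc, Fin.lt_def]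
      rcases lt_or_eq_of_le hle with h' | h'
      · exact h'
      · exact absurd (Fin.ext h') hne
  have hmono2 : StrictMono (⇑x : Fin N → Fin N) := by
    intro u v huv
    rcases lt_trichotomy (x u) (x v) with h' | h' | h'
    · exact h'
    · exact absurd (x.injective h') huv.ne
    · have := hmono h'
      simp only [Equiv.Perm.coe_inv, Equiv.symm_apply_apply] at this
      exact absurd huv (not_lt.mpr this.le)
  apply hx
  apply Equiv.ext
  intro u
  have h1 : u ≤ x u :=
    @StrictMono.le_apply (Fin N) _ (inferInstance : WellFoundedLT (Fin N)) _ hmono2 u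
  have h2 : x u ≤ u := by
    have := @StrictMono.le_apply (Fin N) _ (inferInstance : WellFoundedLT (Fin N)) _ hmono (x u)
    rwa [Equiv.Perm.coe_inv, Equiv.symm_apply_apply] at this
  exact le_antisymm h2 h1

lemma exists_min_word (c : ℕ) : ∀ x : Equiv.Perm (Fin N), invCount x ≤ c →
    ∃ l : List (Equiv.Perm (Fin N)), IsWord l ∧ l.prod = x ∧ l.length = invCount x := by
  induction c with
  | zero =>
    intro x hx
    have hx1 : x = 1 := by
      by_contra hne
      obtain ⟨i, h, hd⟩ := exists_descent x hne
      have := invCount_sw_mul_of_gt h x hd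
      omega
    exact ⟨[], fun τ hτ => absurd hτ List.not_mem_nil, by simp [hx1], by simp [hx1, invCount_one]⟩
  | succ c ih =>
    intro x hx
    by_cases hne : x = 1
    · exact ⟨[], fun τ hτ => absurd hτ List.not_mem_nil, by simp [hne], by simp [hne, invCount_one]⟩
    · obtain ⟨i, h, hd⟩ := exists_descent x hne
      have hcount := invCount_sw_mul_of_gt h x hd
      obtain ⟨l, hl, hlp, hll⟩ := ih (sw i h * x) (by omega)
      refine ⟨sw i h :: l, ?_, ?_, ?_⟩
      · intro τ hτ
        rcases List.mem_cons.mp hτ with rfl | hτ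
        · exact sw_isAdjSwap i h
        · exact hl τ hτ
      · rw [List.prod_cons, hlp, ← mul_assoc, sw_mul_sw, one_mul]
      · rw [List.length_cons, hll]; omega

lemma reduced_iff (l : List (Equiv.Perm (Fin N))) :
    IsReducedWord l ↔ IsWord l ∧ l.length = invCount l.prod := by
  constructor
  · rintro ⟨hw, hmin⟩
    refine ⟨hw, le_antisymm ?_ (invCount_prod_le l hw)⟩
    obtain ⟨l', hl', hlp', hll'⟩ := exists_min_word (invCount l.prod) l.prod le_rfl
    calc l.length ≤ l'.length := hmin l' hl' hlp'
    _ = invCount l.prod := hll'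
  · rintro ⟨hw, hlen⟩
    refine ⟨hw, fun l' hl' hp' => ?_⟩
    rw [hlen, ← hp']
    exact invCount_prod_le l' hl'




/-- number of entries among the first `k` positions with value `≥ m` (all 0-indexed) -/
def dd (x : Equiv.Perm (Fin N)) (k m : ℕ) : ℕ :=
  (Finset.univ.filter fun a : Fin N => (a : ℕ) < k ∧ m ≤ ((x a : Fin N) : ℕ)).card

lemma swap_val (u v a : Fin N) (hadj : (u : ℕ) + 1 = (v : ℕ)) :
    ((Equiv.swap u v a : Fin N) : ℕ) =
      if (a : ℕ) = (u : ℕ) then (v : ℕ) else if (a : ℕ) = (v : ℕ) then (u : ℕ) else (a : ℕ) := by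
  rw [Equiv.swap_apply_def]
  split_ifs with h1 h2 h3 h4 h5 <;> simp_all [Fin.ext_iff]

lemma dd_succ (x : Equiv.Perm (Fin N)) (k : ℕ) (v : Fin N) :
    dd x k (v : ℕ) = dd x k ((v : ℕ) + 1) +
      (if ((x⁻¹ v : Fin N) : ℕ) < k then 1 else 0) := by
  classical
  have hsplit : (Finset.univ.filter fun a : Fin N => (a : ℕ) < k ∧ (v : ℕ) ≤ ((x a : Fin N) : ℕ))
      = (Finset.univ.filter fun a : Fin N => (a : ℕ) < k ∧ (v : ℕ) + 1 ≤ ((x a : Fin N) : ℕ))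
        ∪ (Finset.univ.filter fun a : Fin N => (a : ℕ) < k ∧ ((x a : Fin N) : ℕ) = (v : ℕ)) := by
    ext a
    simp only [mem_filter, mem_univ, true_and, mem_union]
    omega
  have hdisj : Disjoint
      (Finset.univ.filter fun a : Fin N => (a : ℕ) < k ∧ (v : ℕ) + 1 ≤ ((x a : Fin N) : ℕ))
      (Finset.univ.filter fun a : Fin N => (a : ℕ) < k ∧ ((x a : Fin N) : ℕ) = (v : ℕ)) := by
    rw [Finset.disjoint_left]
    intro a ha hb
    simp only [mem_filter, mem_univ, true_and] at ha hb
    omega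
  have hsingle : (Finset.univ.filter fun a : Fin N => (a : ℕ) < k ∧ ((x a : Fin N) : ℕ) = (v : ℕ))
      = if ((x⁻¹ v : Fin N) : ℕ) < k then {x⁻¹ v} else ∅ := by
    ext a
    have e : (((x a : Fin N) : ℕ) = (v : ℕ)) ↔ a = x⁻¹ v := by
      rw [← Fin.ext_iff, ← Equiv.Perm.eq_inv_iff_eq]
    split_ifs with hpos
    · simp only [mem_filter, mem_univ, true_and, mem_singleton, e]
      constructor
      · exact fun h => h.2
      · rintro rfl; exact ⟨hpos, rfl⟩
    · simp only [mem_filter, mem_univ, true_and, notMem_empty, iff_false, not_and, e]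
      rintro h rfl; exact hpos h
  rw [dd, hsplit, Finset.card_union_of_disjoint hdisj, hsingle]
  congr 1
  split_ifs <;> simp

lemma dd_swap_ne (u v : Fin N) (hadj : (u : ℕ) + 1 = (v : ℕ)) (x : Equiv.Perm (Fin N))
    (k m : ℕ) (hm : m ≠ (v : ℕ)) :
    dd (Equiv.swap u v * x) k m = dd x k m := by
  rw [dd, dd]
  congr 1
  apply Finset.filter_congr
  intro a _
  simp only [Equiv.Perm.mul_apply, swap_val _ _ _ hadj]
  split_ifs <;> constructor <;> intro <;> omega

lemma swap_mul_inv_apply (u v : Fin N) (x : Equiv.Perm (Fin N)) :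
    (Equiv.swap u v * x)⁻¹ v = x⁻¹ u := by
  rw [mul_inv_rev, Equiv.swap_inv, Equiv.Perm.mul_apply, Equiv.swap_apply_right]

lemma dd_swap_top (u v : Fin N) (hadj : (u : ℕ) + 1 = (v : ℕ)) (x : Equiv.Perm (Fin N)) (k : ℕ) :
    dd (Equiv.swap u v * x) k (v : ℕ)
      = dd x k ((v : ℕ) + 1) + (if ((x⁻¹ u : Fin N) : ℕ) < k then 1 else 0) := by
  rw [dd_succ (Equiv.swap u v * x) k v, dd_swap_ne u v hadj x k ((v : ℕ) + 1) (by omega),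
    swap_mul_inv_apply]

/-- dominance order -/
def DLE (x y : Equiv.Perm (Fin N)) : Prop := ∀ k m, dd x k m ≤ dd y k m

lemma dd_ueq (u v : Fin N) (hadj : (u : ℕ) + 1 = (v : ℕ)) (x : Equiv.Perm (Fin N)) (k : ℕ) :
    dd x k (u : ℕ) = dd x k ((v : ℕ) + 1) + (if ((x⁻¹ v : Fin N) : ℕ) < k then 1 else 0)
      + (if ((x⁻¹ u : Fin N) : ℕ) < k then 1 else 0) := by
  rw [dd_succ x k u, hadj, dd_succ x k v]

lemma dle_L0 (u v : Fin N) (hadj : (u : ℕ) + 1 = (v : ℕ)) (x y : Equiv.Perm (Fin N))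
    (hy : ((y⁻¹ u : Fin N) : ℕ) < ((y⁻¹ v : Fin N) : ℕ)) (hxy : DLE x y) :
    DLE (Equiv.swap u v * x) (Equiv.swap u v * y) := by
  intro k m
  by_cases hm : m = (v : ℕ)
  · subst hm
    rw [dd_swap_top u v hadj x k, dd_swap_top u v hadj y k]
    have h0 := hxy k (u : ℕ)
    have h2 := hxy k ((v : ℕ) + 1)
    rw [dd_ueq u v hadj x k, dd_ueq u v hadj y k] at h0
    split_ifs at h0 ⊢ <;> omega
  · rw [dd_swap_ne u v hadj x k m hm, dd_swap_ne u v hadj y k m hm]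
    exact hxy k m

lemma dle_ascent (u v : Fin N) (hadj : (u : ℕ) + 1 = (v : ℕ)) (y : Equiv.Perm (Fin N))
    (hy : ((y⁻¹ u : Fin N) : ℕ) < ((y⁻¹ v : Fin N) : ℕ)) :
    DLE y (Equiv.swap u v * y) := by
  intro k m
  by_cases hm : m = (v : ℕ)
  · subst hm
    rw [dd_swap_top u v hadj y k, dd_succ y k v]
    split_ifs <;> omega
  · rw [dd_swap_ne u v hadj y k m hm]

lemma dle_L1 (u v : Fin N) (hadj : (u : ℕ) + 1 = (v : ℕ)) (x y : Equiv.Perm (Fin N))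
    (hy : ((y⁻¹ v : Fin N) : ℕ) < ((y⁻¹ u : Fin N) : ℕ))
    (hx : ((x⁻¹ v : Fin N) : ℕ) < ((x⁻¹ u : Fin N) : ℕ)) (hxy : DLE x y) :
    DLE (Equiv.swap u v * x) (Equiv.swap u v * y) := by
  intro k m
  by_cases hm : m = (v : ℕ)
  · subst hm
    rw [dd_swap_top u v hadj x k, dd_swap_top u v hadj y k]
    have h0 := hxy k (u : ℕ)
    have h2 := hxy k ((v : ℕ) + 1)
    rw [dd_ueq u v hadj x k, dd_ueq u v hadj y k] at h0
    split_ifs at h0 ⊢ <;> omega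
  · rw [dd_swap_ne u v hadj x k m hm, dd_swap_ne u v hadj y k m hm]
    exact hxy k m

lemma dle_L2 (u v : Fin N) (hadj : (u : ℕ) + 1 = (v : ℕ)) (x y : Equiv.Perm (Fin N))
    (hy : ((y⁻¹ v : Fin N) : ℕ) < ((y⁻¹ u : Fin N) : ℕ))
    (hx : ((x⁻¹ u : Fin N) : ℕ) < ((x⁻¹ v : Fin N) : ℕ)) (hxy : DLE x y) :
    DLE x (Equiv.swap u v * y) := by
  intro k m
  by_cases hm : m = (v : ℕ)
  · subst hm
    rw [dd_swap_top u v hadj y k, dd_succ x k v]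
    have h0 := hxy k (u : ℕ)
    have h2 := hxy k ((v : ℕ) + 1)
    rw [dd_ueq u v hadj x k, dd_ueq u v hadj y k] at h0
    split_ifs at h0 ⊢ <;> omega
  · rw [dd_swap_ne u v hadj y k m hm]
    exact hxy k m

lemma dle_refl (x : Equiv.Perm (Fin N)) : DLE x x := fun _ _ => le_rfl

lemma dle_trans {x y z : Equiv.Perm (Fin N)} (h1 : DLE x y) (h2 : DLE y z) : DLE x z :=
  fun k m => (h1 k m).trans (h2 k m)

lemma dle_one {x : Equiv.Perm (Fin N)} (h : DLE x 1) : x = 1 := by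
  have key : ∀ k, k ≤ N → ∀ a : Fin N, (a : ℕ) < k → ((x a : Fin N) : ℕ) < k := by
    intro k _ a ha
    by_contra hge
    have h1 : 0 < dd x k k := by
      rw [dd, Finset.card_pos]
      exact ⟨a, by simp only [mem_filter, mem_univ, true_and]; omega⟩
    have h2 : dd (1 : Equiv.Perm (Fin N)) k k = 0 := by
      rw [dd, Finset.card_eq_zero, Finset.filter_eq_empty_iff]
      intro b _
      simp only [Equiv.Perm.one_apply, not_and]
      omega
    have := h k k
    omega
  have main : ∀ c : ℕ, ∀ a : Fin N, (a : ℕ) ≤ c → x a = a := by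
    intro c
    induction c with
    | zero =>
      intro a ha
      have h1 : ((x a : Fin N) : ℕ) < 1 := key 1 (by omega) a (by omega)
      apply Fin.ext; omega
    | succ c ih =>
      intro a ha
      rcases Nat.lt_succ_iff_lt_or_eq.mp (Nat.lt_succ_of_le ha) with h' | h'
      · exact ih a (by omega)
      · have hN : c + 2 ≤ N := by have := a.2; omega
        have h1 : ((x a : Fin N) : ℕ) < c + 2 := key (c+2) hN a (by omega)
        by_cases h2 : ((x a : Fin N) : ℕ) ≤ c
        · exfalso
          set b : Fin N := ⟨((x a : Fin N) : ℕ), by omega⟩ with hb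
          have hxb : x b = b := ih b h2
          have hab : x a = b := Fin.ext rfl
          have : a = b := x.injective (by rw [hab, hxb])
          have := congrArg Fin.val this
          simp only [hb] at this
          omega
        · apply Fin.ext; omega
  apply Equiv.ext
  intro a
  exact main (a : ℕ) a le_rfl


-- Bridges between `sw` and `Equiv.swap u v`
lemma swap_eq_sw (u v : Fin N) (hadj : (u : ℕ) + 1 = (v : ℕ)) (h : (u : ℕ) + 1 < N) :
    Equiv.swap u v = sw (u : ℕ) h := by
  have e2 : (⟨(u : ℕ) + 1, h⟩ : Fin N) = v := by apply Fin.ext; simpa using hadj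
  rw [sw, e2]

lemma invCount_swap_mul_of_lt (u v : Fin N) (hadj : (u : ℕ) + 1 = (v : ℕ))
    (x : Equiv.Perm (Fin N)) (hx : ((x⁻¹ u : Fin N) : ℕ) < ((x⁻¹ v : Fin N) : ℕ)) :
    invCount (Equiv.swap u v * x) = invCount x + 1 := by
  have h : (u : ℕ) + 1 < N := by have := v.2; omega
  rw [swap_eq_sw u v hadj h]
  apply invCount_sw_mul_of_lt h x
  have e1 : (⟨(u : ℕ), by omega⟩ : Fin N) = u := Fin.ext rfl
  have e2 : (⟨(u : ℕ) + 1, h⟩ : Fin N) = v := Fin.ext hadj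
  rw [e1, e2]
  exact hx

lemma invCount_swap_mul_of_gt (u v : Fin N) (hadj : (u : ℕ) + 1 = (v : ℕ))
    (x : Equiv.Perm (Fin N)) (hx : ((x⁻¹ v : Fin N) : ℕ) < ((x⁻¹ u : Fin N) : ℕ)) :
    invCount x = invCount (Equiv.swap u v * x) + 1 := by
  have h : (u : ℕ) + 1 < N := by have := v.2; omega
  rw [swap_eq_sw u v hadj h]
  apply invCount_sw_mul_of_gt h x
  have e1 : (⟨(u : ℕ), by omega⟩ : Fin N) = u := Fin.ext rfl
  have e2 : (⟨(u : ℕ) + 1, h⟩ : Fin N) = v := Fin.ext hadj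
  rw [e1, e2]
  exact hx

lemma inv_ne (u v : Fin N) (hadj : (u : ℕ) + 1 = (v : ℕ)) (x : Equiv.Perm (Fin N)) :
    ((x⁻¹ u : Fin N) : ℕ) ≠ ((x⁻¹ v : Fin N) : ℕ) := by
  intro he
  have : x⁻¹ u = x⁻¹ v := Fin.ext he
  have := x⁻¹.injective this
  rw [this] at hadj
  omega

lemma isAdjSwap_swap {t : Equiv.Perm (Fin N)} (ht : IsAdjSwap t) :
    ∃ u v : Fin N, (u : ℕ) + 1 = (v : ℕ) ∧ t = Equiv.swap u v := ht

lemma reduced_tail {t : Equiv.Perm (Fin N)} {r : List (Equiv.Perm (Fin N))}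
    (h : IsReducedWord (t :: r)) : IsReducedWord r := by
  obtain ⟨hw, hmin⟩ := h
  refine ⟨fun τ hτ => hw τ (List.mem_cons_of_mem _ hτ), fun l' hl' hp' => ?_⟩
  have hword : IsWord (t :: l') := by
    intro τ hτ
    rcases List.mem_cons.mp hτ with rfl | hτ
    · exact hw _ (List.mem_cons_self (l := r))
    · exact hl' τ hτ
  have := hmin (t :: l') hword (by rw [List.prod_cons, List.prod_cons, hp'])
  simpa using this

lemma reduced_cons_ascent (u v : Fin N) (hadj : (u : ℕ) + 1 = (v : ℕ))
    (r : List (Equiv.Perm (Fin N))) (h : IsReducedWord (Equiv.swap u v :: r)) :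
    ((r.prod⁻¹ u : Fin N) : ℕ) < ((r.prod⁻¹ v : Fin N) : ℕ) := by
  rcases lt_or_gt_of_ne (inv_ne u v hadj r.prod) with hlt | hgt
  · exact hlt
  · exfalso
    have hr := reduced_tail h
    have h1 := (reduced_iff _).mp h
    have h2 := (reduced_iff _).mp hr
    have h3 := invCount_swap_mul_of_gt u v hadj r.prod hgt
    rw [List.prod_cons] at h1
    have := h1.2
    have := h2.2
    simp only [List.length_cons] at *
    omega

lemma reduced_cons (u v : Fin N) (hadj : (u : ℕ) + 1 = (v : ℕ))
    (l : List (Equiv.Perm (Fin N))) (hl : IsReducedWord l)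
    (hasc : invCount (Equiv.swap u v * l.prod) = invCount l.prod + 1) :
    IsReducedWord (Equiv.swap u v :: l) := by
  rw [reduced_iff]
  obtain ⟨hw, hlen⟩ := (reduced_iff l).mp hl
  constructor
  · intro τ hτ
    rcases List.mem_cons.mp hτ with rfl | hτ
    · exact ⟨u, v, hadj, rfl⟩
    · exact hw τ hτ
  · rw [List.length_cons, List.prod_cons, hasc, hlen]

lemma dle_of_sublist (l : List (Equiv.Perm (Fin N))) (hred : IsReducedWord l) :
    ∀ l' : List (Equiv.Perm (Fin N)), l'.Sublist l → DLE l'.prod l.prod := by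
  induction l with
  | nil =>
    intro l' hsub
    rw [List.sublist_nil.mp hsub]
    exact dle_refl _
  | cons t r ih =>
    intro l' hsub
    obtain ⟨u, v, hadj, rfl⟩ := hred.1 t (List.mem_cons_self (a := t) (l := r))
    have hr := reduced_tail hred
    have hasc := reduced_cons_ascent u v hadj r hred
    rcases List.sublist_cons_iff.mp hsub with hs | ⟨l'', rfl, hs⟩
    · have h1 := ih hr l' hs
      rw [List.prod_cons]
      exact dle_trans h1 (dle_ascent u v hadj r.prod hasc)
    · have h1 := ih hr l'' hs
      rw [List.prod_cons, List.prod_cons]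
      exact dle_L0 u v hadj l''.prod r.prod hasc h1

lemma bruhatLE_of_dle_aux (c : ℕ) : ∀ x y : Equiv.Perm (Fin N), invCount y ≤ c →
    DLE x y → bruhatLE x y := by
  induction c with
  | zero =>
    intro x y hy hxy
    have hy1 : y = 1 := by
      by_contra hne
      obtain ⟨i, h, hd⟩ := exists_descent y hne
      have := invCount_sw_mul_of_gt h y hd
      omega
    subst hy1
    have hx1 : x = 1 := dle_one hxy
    subst hx1
    exact ⟨[], ⟨fun τ hτ => absurd hτ List.not_mem_nil, fun l' _ _ => Nat.zero_le _⟩,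
      rfl, [], List.Sublist.refl _, rfl⟩
  | succ c ih =>
    intro x y hy hxy
    by_cases hne : y = 1
    · subst hne
      have hx1 : x = 1 := dle_one hxy
      subst hx1
      exact ⟨[], ⟨fun τ hτ => absurd hτ List.not_mem_nil, fun l' _ _ => Nat.zero_le _⟩,
        rfl, [], List.Sublist.refl _, rfl⟩
    · obtain ⟨i, h, hd⟩ := exists_descent y hne
      set u : Fin N := ⟨i, by omega⟩ with hu
      set v : Fin N := ⟨i+1, h⟩ with hv
      have hadj : (u : ℕ) + 1 = (v : ℕ) := rfl
      have hdy : ((y⁻¹ v : Fin N) : ℕ) < ((y⁻¹ u : Fin N) : ℕ) := hd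
      have hcy := invCount_swap_mul_of_gt u v hadj y hdy
      set y' : Equiv.Perm (Fin N) := Equiv.swap u v * y with hy'
      have hyy : Equiv.swap u v * y' = y := by
        rw [hy', ← mul_assoc, Equiv.swap_mul_self, one_mul]
      have hcy' : invCount y' ≤ c := by omega
      rcases lt_or_gt_of_ne (inv_ne u v hadj x) with hxlt | hxgt
      · -- x has ascent: use L2
        have hdle : DLE x y' := dle_L2 u v hadj x y hdy hxlt hxy
        obtain ⟨l, hl, hlp, l'', hsub, hx''⟩ := ih x y' hcy' hdle
        refine ⟨Equiv.swap u v :: l, ?_, ?_, l'', hsub.cons _, hx''⟩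
        · apply reduced_cons u v hadj l hl
          rw [hlp, hyy]
          omega
        · rw [List.prod_cons, hlp, hyy]
      · -- x has descent: use L1
        have hdx : ((x⁻¹ v : Fin N) : ℕ) < ((x⁻¹ u : Fin N) : ℕ) := hxgt
        have hdle : DLE (Equiv.swap u v * x) y' := dle_L1 u v hadj x y hdy hdx hxy
        obtain ⟨l, hl, hlp, l'', hsub, hx''⟩ := ih (Equiv.swap u v * x) y' hcy' hdle
        refine ⟨Equiv.swap u v :: l, ?_, ?_, Equiv.swap u v :: l'', hsub.cons₂ _, ?_⟩
        · apply reduced_cons u v hadj l hl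
          rw [hlp, hyy]
          omega
        · rw [List.prod_cons, hlp, hyy]
        · rw [List.prod_cons, hx'', ← mul_assoc, Equiv.swap_mul_self, one_mul]

theorem bruhatLE_iff_dle (x y : Equiv.Perm (Fin N)) : bruhatLE x y ↔ DLE x y := by
  constructor
  · rintro ⟨l, hred, rfl, l', hsub, rfl⟩
    exact dle_of_sublist l hred l' hsub
  · intro h
    exact bruhatLE_of_dle_aux (invCount y) x y le_rfl h

lemma card_lt_val (c : ℕ) : (Finset.univ.filter fun a : Fin N => (a : ℕ) < c).card = min c N := by
  rcases le_total c N with h | h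
  · rw [min_eq_left h]
    have : (Finset.univ.filter fun a : Fin N => (a : ℕ) < c)
        = Finset.map ⟨fun b : Fin c => (⟨(b : ℕ), by omega⟩ : Fin N),
            fun a b hab => by simpa [Fin.ext_iff] using hab⟩ Finset.univ := by
      ext a
      simp only [Finset.mem_map, Finset.mem_filter, Finset.mem_univ, true_and,
        Function.Embedding.coeFn_mk]
      constructor
      · intro ha; exact ⟨⟨(a : ℕ), ha⟩, Fin.ext rfl⟩
      · rintro ⟨b, hb⟩
        have := congrArg Fin.val hb
        rw [← hb]; exact b.2
    rw [this, Finset.card_map, Finset.card_univ, Fintype.card_fin]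
  · rw [min_eq_right h]
    rw [Finset.filter_true_of_mem (fun a _ => lt_of_lt_of_le a.2 h), Finset.card_univ,
      Fintype.card_fin]

lemma card_ge_val (m : ℕ) : (Finset.univ.filter fun v : Fin N => m ≤ (v : ℕ)).card = N - m := by
  have h1 := Finset.card_filter_add_card_filter_not
    (s := (Finset.univ : Finset (Fin N))) (p := fun v : Fin N => (v : ℕ) < m)
  have h2 : (Finset.univ.filter fun v : Fin N => ¬ ((v : ℕ) < m))
      = (Finset.univ.filter fun v : Fin N => m ≤ (v : ℕ)) := by
    apply Finset.filter_congr; intro a _; simp [not_lt]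
  rw [h2, card_lt_val, Finset.card_univ, Fintype.card_fin] at h1
  omega

lemma dd_le_pos (x : Equiv.Perm (Fin N)) (k m : ℕ) : dd x k m ≤ k := by
  have hsub : (Finset.univ.filter fun a : Fin N => (a : ℕ) < k ∧ m ≤ ((x a : Fin N) : ℕ))
      ⊆ (Finset.univ.filter fun a : Fin N => (a : ℕ) < k) := by
    intro a ha
    simp only [mem_filter, mem_univ, true_and] at ha ⊢
    exact ha.1
  calc dd x k m ≤ _ := Finset.card_le_card hsub
  _ = min k N := card_lt_val k
  _ ≤ k := min_le_left _ _

lemma dd_le_val (x : Equiv.Perm (Fin N)) (k m : ℕ) : dd x k m ≤ N - m := by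
  rw [← card_ge_val (N := N) m]
  apply Finset.card_le_card_of_injOn (fun a => x a)
  · intro a ha
    simp only [Finset.mem_coe, mem_filter, mem_univ, true_and] at ha ⊢
    exact ha.2
  · intro a _ b _ hab
    exact x.injective hab

lemma dd_le_val_excl (x : Equiv.Perm (Fin N)) (k m : ℕ) (hN : 0 < N) (hk : k ≤ N - 1)
    (hm : m ≤ ((x ⟨N - 1, by omega⟩ : Fin N) : ℕ)) : dd x k m ≤ N - m - 1 := by
  have hcard : ((Finset.univ.filter fun v : Fin N => m ≤ (v : ℕ)).erase
      (x ⟨N - 1, by omega⟩)).card = N - m - 1 := by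
    rw [Finset.card_erase_of_mem (by simp only [mem_filter, mem_univ, true_and]; exact hm),
      card_ge_val]
  rw [← hcard]
  apply Finset.card_le_card_of_injOn (fun a => x a)
  · intro a ha
    simp only [Finset.mem_coe, mem_filter, mem_univ, true_and] at ha
    rw [Finset.mem_coe, Finset.mem_erase]
    constructor
    · intro he
      have : a = (⟨N - 1, by omega⟩ : Fin N) := x.injective he
      have := congrArg Fin.val this
      simp only at this
      omega
    · simp only [mem_filter, mem_univ, true_and]
      exact ha.2
  · intro a _ b _ hab
    exact x.injective hab

lemma dd_ge_of_subset (x : Equiv.Perm (Fin N)) (k m c : ℕ)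
    (h : ∀ a : Fin N, (a : ℕ) < c → (a : ℕ) < k ∧ m ≤ ((x a : Fin N) : ℕ)) :
    min c N ≤ dd x k m := by
  rw [← card_lt_val (N := N) c]
  apply Finset.card_le_card
  intro a ha
  simp only [mem_filter, mem_univ, true_and] at ha ⊢
  exact h a ha

lemma dd_zero_of_big (x : Equiv.Perm (Fin N)) (k m : ℕ) (hm : N ≤ m) : dd x k m = 0 := by
  rw [dd, Finset.card_eq_zero, Finset.filter_eq_empty_iff]
  intro a _
  have := (x a).2
  intro hcon
  omega

lemma dd_of_ge (x : Equiv.Perm (Fin N)) (k m : ℕ) (hk : N ≤ k) :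
    dd x k m = (Finset.univ.filter fun v : Fin N => m ≤ (v : ℕ)).card := by
  apply Finset.card_bij' (fun (a : Fin N) (_ : a ∈ _) => x a)
    (fun (v : Fin N) (_ : v ∈ _) => x⁻¹ v)
  · intro a ha
    simp only [mem_filter, mem_univ, true_and] at ha ⊢
    exact ha.2
  · intro v hv
    simp only [mem_filter, mem_univ, true_and] at hv ⊢
    constructor
    · have := (x⁻¹ v).2; omega
    · rw [Equiv.Perm.coe_inv, Equiv.apply_symm_apply]; exact hv
  · intro a _; rw [Equiv.Perm.coe_inv, Equiv.symm_apply_apply]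
  · intro v _; rw [Equiv.Perm.coe_inv, Equiv.apply_symm_apply]

end BAux

open BAux

/-- Let `n ≥ 1` and let `λ ∈ S₂ₙ` be as above.  Then for every
`w ∈ S₂ₙ`: `w ≤ λ` in the Bruhat order iff `w(2n) ≥ n + 1`.  Consequently the set
`I₂ₙ = {w : w(2n) > n}` equals the principal ideal `{w : w ≤ λ}` (so it is an ideal), and
it is balanced: `w₀ * (S₂ₙ \ I₂ₙ) = I₂ₙ`, where `w₀(i) = 2n + 1 - i`. -/
theorem principal_balanced_ideal (n : ℕ) (hn : 1 ≤ n)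
    (lam : Equiv.Perm (Fin (2 * n)))
    (hlam : ∀ i : ℕ, 1 ≤ i → i ≤ 2 * n → ap lam i = lamVal n i)
    (w₀ : Equiv.Perm (Fin (2 * n)))
    (hw₀ : ∀ i : ℕ, 1 ≤ i → i ≤ 2 * n → ap w₀ i = 2 * n + 1 - i) :
    (∀ w : Equiv.Perm (Fin (2 * n)), bruhatLE w lam ↔ n + 1 ≤ ap w (2 * n)) ∧
    ({w : Equiv.Perm (Fin (2 * n)) | n < ap w (2 * n)} =
        {w : Equiv.Perm (Fin (2 * n)) | bruhatLE w lam}) ∧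
    ((fun x => w₀ * x) '' {w : Equiv.Perm (Fin (2 * n)) | n < ap w (2 * n)}ᶜ =
        {w : Equiv.Perm (Fin (2 * n)) | n < ap w (2 * n)}) := by
  have hN : 1 ≤ 2 * n := by omega
  have hlastlt : 2 * n - 1 < 2 * n := by omega
  set last : Fin (2 * n) := ⟨2 * n - 1, hlastlt⟩ with hlastdef
  have hap : ∀ w : Equiv.Perm (Fin (2 * n)), ap w (2 * n) = ((w last : Fin (2 * n)) : ℕ) + 1 := by
    intro w
    rw [ap, dif_pos ⟨hN, le_rfl⟩]
  have hap' : ∀ (w : Equiv.Perm (Fin (2 * n))) (a : Fin (2 * n)),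
      ap w ((a : ℕ) + 1) = ((w a : Fin (2 * n)) : ℕ) + 1 := by
    intro w a
    have h2 := a.2
    rw [ap, dif_pos ⟨by omega, by omega⟩]
    exact congrArg (fun b : Fin (2 * n) => ((w b : Fin (2 * n)) : ℕ) + 1)
      (Fin.ext (show (a : ℕ) + 1 - 1 = (a : ℕ) by omega))
  -- pointwise values of lam, 0-indexed
  have hlv : ∀ a : Fin (2 * n), ((lam a : Fin (2 * n)) : ℕ) =
      if (a : ℕ) + 1 ≤ n - 1 then 2 * n - (a : ℕ) - 1
      else if (a : ℕ) + 1 ≤ 2 * n - 1 then 2 * n - (a : ℕ) - 2 else n := by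
    intro a
    have h2 := a.2
    have h1 := hlam ((a : ℕ) + 1) (by omega) (by omega)
    rw [hap', lamVal] at h1
    split_ifs at h1 ⊢ <;> omega
  -- the main equivalence
  have key : ∀ w : Equiv.Perm (Fin (2 * n)), bruhatLE w lam ↔ n ≤ ((w last : Fin (2 * n)) : ℕ) := by
    intro w
    rw [bruhatLE_iff_dle]
    constructor
    · intro hd
      by_contra hcon
      push_neg at hcon
      have h1 := hd (2 * n - 1) n
      -- dd lam (2n-1) n ≤ n - 1
      have h2 : dd lam (2 * n - 1) n ≤ n - 1 := by
        have hsub : (Finset.univ.filter fun a : Fin (2 * n) =>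
              (a : ℕ) < 2 * n - 1 ∧ n ≤ ((lam a : Fin (2 * n)) : ℕ))
            ⊆ (Finset.univ.filter fun a : Fin (2 * n) => (a : ℕ) < n - 1) := by
          intro a ha
          simp only [Finset.mem_filter, Finset.mem_univ, true_and] at ha ⊢
          have := hlv a
          split_ifs at this <;> omega
        calc dd lam (2 * n - 1) n ≤ _ := Finset.card_le_card hsub
        _ = min (n - 1) (2 * n) := card_lt_val _
        _ ≤ n - 1 := min_le_left _ _
      -- n ≤ dd w (2n-1) n
      have h3 : n ≤ dd w (2 * n - 1) n := by
        have hinj : (Finset.univ.filter fun v : Fin (2 * n) => n ≤ (v : ℕ)).card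
            ≤ dd w (2 * n - 1) n := by
          apply Finset.card_le_card_of_injOn (fun v => w⁻¹ v)
          · intro v hv
            simp only [Finset.mem_coe, Finset.mem_filter, Finset.mem_univ, true_and] at hv ⊢
            constructor
            · have hne : w⁻¹ v ≠ last := by
                intro he
                have : v = w last := by rw [← he, Equiv.Perm.coe_inv, Equiv.apply_symm_apply]
                have := congrArg Fin.val this
                omega
              have hb := (w⁻¹ v).2
              have : ((w⁻¹ v : Fin (2 * n)) : ℕ) ≠ 2 * n - 1 := by
                intro he
                exact hne (Fin.ext he)
              omega
            · rw [Equiv.Perm.coe_inv, Equiv.apply_symm_apply]; exact hv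
          · intro a _ b _ hab
            exact w⁻¹.injective hab
        rw [card_ge_val] at hinj
        omega
      omega
    · intro hwlast
      intro k m
      by_cases hm2 : 2 * n ≤ m
      · rw [dd_zero_of_big w k m hm2]
        exact Nat.zero_le _
      by_cases hk2 : 2 * n ≤ k
      · rw [dd_of_ge w k m hk2, dd_of_ge lam k m hk2]
      push_neg at hm2 hk2
      by_cases hm : n + 1 ≤ m
      · -- case A : big threshold
        have hw1 := dd_le_pos w k m
        have hw2 := dd_le_val w k m
        have hl1 : min (min k (2 * n - m)) (2 * n) ≤ dd lam k m := by
          apply dd_ge_of_subset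
          intro a ha
          have := hlv a
          have h2 := a.2
          constructor
          · omega
          · split_ifs at this <;> omega
        omega
      · -- case B : small threshold, uses w(last) ≥ n
        push_neg at hm
        have hw1 := dd_le_pos w k m
        have hw2 : dd w k m ≤ 2 * n - m - 1 := by
          apply dd_le_val_excl w k m (by omega) (by omega)
          exact le_trans (show m ≤ n by omega) hwlast
        have hl1 : min (min k (2 * n - m - 1)) (2 * n) ≤ dd lam k m := by
          apply dd_ge_of_subset
          intro a ha
          have := hlv a
          have h2 := a.2
          constructor
          · omega
          · split_ifs at this <;> omega
        omega
  refine ⟨?_, ?_, ?_⟩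
  · intro w
    rw [key w, hap w]
    omega
  · ext w
    simp only [Set.mem_setOf_eq]
    rw [key w, hap w]
    omega
  · -- the balanced property
    have hw0v : ∀ a : Fin (2 * n), ((w₀ a : Fin (2 * n)) : ℕ) = 2 * n - 1 - (a : ℕ) := by
      intro a
      have h2 := a.2
      have h1 := hw₀ ((a : ℕ) + 1) (by omega) (by omega)
      rw [hap'] at h1
      omega
    have hw00 : w₀ * w₀ = 1 := by
      apply Equiv.ext
      intro a
      rw [Equiv.Perm.mul_apply, Equiv.Perm.one_apply]
      apply Fin.ext
      rw [hw0v, hw0v]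
      have := a.2
      omega
    ext y
    simp only [Set.mem_image, Set.mem_compl_iff, Set.mem_setOf_eq, not_lt]
    constructor
    · rintro ⟨x, hx, rfl⟩
      rw [hap] at hx ⊢
      rw [Equiv.Perm.mul_apply, hw0v]
      have := (x last).2
      omega
    · intro hy
      refine ⟨w₀ * y, ?_, ?_⟩
      · rw [hap] at hy ⊢
        rw [Equiv.Perm.mul_apply, hw0v]
        have := (y last).2
        omega
      · rw [← mul_assoc, hw00, one_mul]
end
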